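/- arXiv:2011.10172 — 3 statements merged into one kernel-verified Lean document; each statement's English description precedes it below -/
import Mathlib

section
/- Let G ∈ 𝒢_{2n}. Then f(G) = n−1 if and only if either G is a complete multipartite graph in which every partite set has size at most n, or G belongs to 𝒦_{n,n}^+. -/
open SimpleGraph

/-- `M` is a perfect matching of the simple graph `G`, viewed as a set of edges:
the edges of `M` are pairwise disjoint edges of `G` covering every vertex. -/
def IsPM {V : Type*} (G : SimpleGraph V) (M : Set (Sym2 V)) : Prop :=
  M ⊆ G.edgeSet ∧
  (∀ e ∈ M, ∀ f ∈ M, e ≠ f → ∀ v : V, v ∈ e → v ∉ f) ∧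
  (∀ v : V, ∃ e ∈ M, v ∈ e)

/-- `S` is a forcing set of the perfect matching `M` of `G`:
`S ⊆ M` and `M` is the unique perfect matching of `G` containing `S`. -/
def IsForcingSet {V : Type*} (G : SimpleGraph V) (M S : Set (Sym2 V)) : Prop :=
  S ⊆ M ∧ ∀ M', IsPM G M' → S ⊆ M' → M' = M

/-- The forcing number `f(G,M)`: smallest cardinality of a forcing set of `M`. -/
noncomputable def forcingNum {V : Type*} (G : SimpleGraph V) (M : Set (Sym2 V)) : ℕ :=
  sInf {k | ∃ S, IsForcingSet G M S ∧ S.ncard = k}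

/-- The minimum forcing number `f(G)`. -/
noncomputable def minForcing {V : Type*} (G : SimpleGraph V) : ℕ :=
  sInf {k | ∃ M, IsPM G M ∧ forcingNum G M = k}

/-- The maximum forcing number `F(G)`. -/
noncomputable def maxForcing {V : Type*} (G : SimpleGraph V) : ℕ :=
  sSup {k | ∃ M, IsPM G M ∧ forcingNum G M = k}

/-- Vertex connectivity `κ(G)`: least size of a set of vertices whose deletion
disconnects the graph or leaves at most one vertex. -/
noncomputable def vertexConn {V : Type*} (G : SimpleGraph V) : ℕ :=
  sInf {k | ∃ X : Set V, X.ncard = k ∧ (¬ (G.induce Xᶜ).Connected ∨ Xᶜ.ncard ≤ 1)}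

/-- Edge connectivity `λ(G)`: least size of a set of edges whose deletion
disconnects the graph. -/
noncomputable def edgeConn {V : Type*} (G : SimpleGraph V) : ℕ :=
  sInf {k | ∃ F : Set (Sym2 V), F ⊆ G.edgeSet ∧ F.ncard = k ∧ ¬ (G.deleteEdges F).Connected}

/-- `G` is `l`-extendable: `G` is connected, has at least `2l+2` vertices, has a
perfect matching, and every matching of size `l` extends to a perfect matching. -/
def IsExtendable {V : Type*} [Fintype V] (G : SimpleGraph V) (l : ℕ) : Prop :=
  G.Connected ∧ 2 * l + 2 ≤ Fintype.card V ∧ (∃ M, IsPM G M) ∧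
    ∀ N : Set (Sym2 V), N ⊆ G.edgeSet →
      (∀ e ∈ N, ∀ f ∈ N, e ≠ f → ∀ v : V, v ∈ e → v ∉ f) → N.ncard = l →
      ∃ M, IsPM G M ∧ N ⊆ M

/-- `G` is factor-critical: deleting any vertex leaves a graph with a perfect matching. -/
def IsFactorCritical {V : Type*} (G : SimpleGraph V) : Prop :=
  ∀ v : V, ∃ M, IsPM (G.induce {v}ᶜ) M

/-- `o(G)`: the number of connected components of odd order. -/
noncomputable def oddComponents {V : Type*} (G : SimpleGraph V) : ℕ :=
  {c : G.ConnectedComponent | Odd c.supp.ncard}.ncard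

/-- `G` belongs to `𝒦_{n,n}⁺`: it is obtained from `K_{n,n}` by adding edges inside one
partite set; equivalently there is an independent set `A` of size `n` all of whose
vertices are adjacent to all vertices outside `A`. -/
def InKnnPlus {V : Type*} (n : ℕ) (G : SimpleGraph V) : Prop :=
  ∃ A : Set V, A.ncard = n ∧ (∀ a ∈ A, ∀ b ∈ A, ¬ G.Adj a b) ∧
    ∀ a ∈ A, ∀ b ∉ A, G.Adj a b

/-- `M` is a perfect matching of the subgraph of `G` induced by the vertex set `T`. -/
def IsPMOn {V : Type*} (G : SimpleGraph V) (T : Set V) (M : Set (Sym2 V)) : Prop :=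
  M ⊆ G.edgeSet ∧ (∀ e ∈ M, ∀ w : V, w ∈ e → w ∈ T) ∧
  (∀ e ∈ M, ∀ f ∈ M, e ≠ f → ∀ v : V, v ∈ e → v ∉ f) ∧
  (∀ w ∈ T, ∃ e ∈ M, w ∈ e)

/-- The forcing number of the perfect matching `M` of the subgraph of `G`
induced by the vertex set `T`. -/
noncomputable def forcingNumOn {V : Type*} (G : SimpleGraph V) (T : Set V)
    (M : Set (Sym2 V)) : ℕ :=
  sInf {k | ∃ S, S ⊆ M ∧ (∀ M', IsPMOn G T M' → S ⊆ M' → M' = M) ∧ S.ncard = k}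

/-- `{i,j}` is one of the `k` special pairs `{2t, 2t+1}` (0-indexed), `t < k`. -/
def pairIdx (k : ℕ) {n : ℕ} (i j : Fin n) : Prop :=
  ∃ t, t < k ∧ ((i.val = 2 * t ∧ j.val = 2 * t + 1) ∨ (j.val = 2 * t ∧ i.val = 2 * t + 1))

/-- The graph `H_k` on vertices `u_0,…,u_{n-1}` (left copy) and `v_0,…,v_{n-1}`
(right copy): edges `u_i v_i` for all `i`; `u_{2t} u_{2t+1}` and `v_{2t} v_{2t+1}`
for `t < k`; and `u_i v_j`, `u_j v_i` for every pair `i ≠ j` that is not one of the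
`k` special pairs. -/
def Hgraph (n k : ℕ) : SimpleGraph (Fin n ⊕ Fin n) :=
  SimpleGraph.fromRel (fun x y =>
    match x, y with
    | Sum.inl i, Sum.inr j => i = j ∨ ¬ pairIdx k i j
    | Sum.inl i, Sum.inl j => pairIdx k i j
    | Sum.inr i, Sum.inr j => pairIdx k i j
    | Sum.inr _, Sum.inl _ => False)

/-- The perfect matching `M₀ = {u_i v_i : i}` of `H_k`. -/
def M0 (n : ℕ) : Set (Sym2 (Fin n ⊕ Fin n)) :=
  {e | ∃ i : Fin n, e = s(Sum.inl i, Sum.inr i)}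


def StarCond {V : Type*} (G : SimpleGraph V) : Prop :=
  ∀ M, IsPM G M → ∀ a b c d : V, s(a,b) ∈ M → s(c,d) ∈ M → s(a,b) ≠ s(c,d) →
    (G.Adj a c ∧ G.Adj b d) ∨ (G.Adj a d ∧ G.Adj b c)

def CrossCond {V : Type*} (G : SimpleGraph V) : Prop :=
  ∀ M, IsPM G M → ∀ a b : V, s(a,b) ∈ M → ¬ Gᶜ.Reachable a b

section Aux
variable {V : Type*} {G : SimpleGraph V} {M : Set (Sym2 V)}

lemma pm_adj (hM : IsPM G M) {a b : V} (h : s(a,b) ∈ M) : G.Adj a b :=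
  (SimpleGraph.mem_edgeSet G).mp (hM.1 h)

lemma pm_unique (hM : IsPM G M) {e f : Sym2 V} (he : e ∈ M) (hf : f ∈ M)
    {v : V} (hve : v ∈ e) (hvf : v ∈ f) : e = f := by
  by_contra hne
  exact hM.2.1 e he f hf hne v hve hvf

lemma pm_partner (hM : IsPM G M) (v : V) : ∃ w, s(v, w) ∈ M := by
  obtain ⟨e, heM, hv⟩ := hM.2.2 v
  obtain ⟨w, rfl⟩ := Sym2.mem_iff_exists.mp hv
  exact ⟨w, heM⟩

lemma pm_rep (hM : IsPM G M) : ∀ e ∈ M, ∃ a b : V, e = s(a,b) ∧ G.Adj a b := by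
  intro e
  induction e using Sym2.ind with
  | _ a b => exact fun he => ⟨a, b, rfl, pm_adj hM he⟩

lemma pm_sub_eq {M' : Set (Sym2 V)} (hM : IsPM G M) (hM' : IsPM G M')
    (h : M ⊆ M') : M' = M := by
  ext e
  refine ⟨fun he => ?_, fun he => h he⟩
  obtain ⟨a, b, rfl, -⟩ := pm_rep hM' e he
  obtain ⟨g, hgM, hag⟩ := hM.2.2 a
  have : s(a,b) = g := pm_unique hM' he (h hgM) (by simp) hag
  exact this ▸ hgM

lemma swapPM {R N : Set (Sym2 V)} (hM : IsPM G M) (hR : R ⊆ M)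
    (hN : N ⊆ G.edgeSet)
    (hNdisj : ∀ e ∈ N, ∀ f ∈ N, e ≠ f → ∀ v : V, v ∈ e → v ∉ f)
    (hcov : ∀ v : V, (∃ e ∈ R, v ∈ e) ↔ (∃ e ∈ N, v ∈ e)) :
    IsPM G ((M \ R) ∪ N) := by
  refine ⟨?_, ?_, ?_⟩
  · rintro e (⟨heM, -⟩ | heN)
    · exact hM.1 heM
    · exact hN heN
  · have key : ∀ e ∈ M \ R, ∀ f ∈ N, ∀ v : V, v ∈ e → v ∉ f := by
      rintro e ⟨heM, heR⟩ f hfN v hve hvf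
      obtain ⟨r, hrR, hvr⟩ := (hcov v).mpr ⟨f, hfN, hvf⟩
      exact heR (pm_unique hM heM (hR hrR) hve hvr ▸ hrR)
    rintro e (heMR | heN) f (hfMR | hfN) hne v hve hvf
    · exact hM.2.1 e heMR.1 f hfMR.1 hne v hve hvf
    · exact key e heMR f hfN v hve hvf
    · exact key f hfMR e heN v hvf hve
    · exact hNdisj e heN f hfN hne v hve hvf
  · intro v
    obtain ⟨e, heM, hve⟩ := hM.2.2 v
    by_cases heR : e ∈ R
    · obtain ⟨f, hfN, hvf⟩ := (hcov v).mp ⟨e, heR, hve⟩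
      exact ⟨f, Or.inr hfN, hvf⟩
    · exact ⟨e, Or.inl ⟨heM, heR⟩, hve⟩

end Aux

section Forcing
variable {V : Type*} {G : SimpleGraph V} {M M' : Set (Sym2 V)}

lemma forcing_self (hM : IsPM G M) : IsForcingSet G M M :=
  ⟨le_refl _, fun M' hM' hsub => pm_sub_eq hM hM' hsub⟩

lemma partner_in_bad {R : Set (Sym2 V)} (hM : IsPM G M) (hM' : IsPM G M')
    (hR : R ⊆ M) (hsub : M \ R ⊆ M') {v t : V} (hvt : s(v,t) ∈ M')
    (hv : ∃ e ∈ R, v ∈ e) (ht : ¬ ∃ e ∈ R, t ∈ e) : False := by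
  obtain ⟨u, htu⟩ := pm_partner hM t
  have hgR : s(t,u) ∉ R := fun h => ht ⟨s(t,u), h, by simp⟩
  have hgM' : s(t,u) ∈ M' := hsub ⟨htu, hgR⟩
  have hne : s(t,u) ≠ s(v,t) := by
    intro h
    obtain ⟨r, hrR, hvr⟩ := hv
    have : s(t,u) = r := pm_unique hM htu (hR hrR) (h ▸ (by simp : v ∈ s(v,t))) hvr
    exact hgR (this ▸ hrR)
  exact hM'.2.1 _ hgM' _ hvt hne t (by simp) (by simp)


lemma forcing_erase (hM : IsPM G M) {a b : V} (hab : s(a,b) ∈ M) :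
    IsForcingSet G M (M \ {s(a,b)}) := by
  refine ⟨Set.diff_subset, fun M' hM' hsub => ?_⟩
  have hR : ({s(a,b)} : Set (Sym2 V)) ⊆ M := by simpa using hab
  obtain ⟨t, hat⟩ := pm_partner hM' a
  have htb : t = b := by
    by_contra hne
    have hta : t ≠ a := (pm_adj hM' hat).ne'
    refine partner_in_bad hM hM' hR hsub hat ⟨s(a,b), rfl, by simp⟩ ?_
    rintro ⟨e, rfl, hte⟩
    simp only [Sym2.mem_iff] at hte
    tauto
  rw [htb] at hat
  refine pm_sub_eq hM hM' (fun e he => ?_)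
  by_cases heq : e = s(a,b)
  · exact heq ▸ hat
  · exact hsub ⟨he, by simpa using heq⟩



lemma pm_partner_unique {M' : Set (Sym2 V)} (hM' : IsPM G M') {u v w : V}
    (h1 : s(u,v) ∈ M') (h2 : s(u,w) ∈ M') : v = w := by
  have h := pm_unique hM' h1 h2 (Sym2.mem_mk_left u v) (Sym2.mem_mk_left u w)
  have hv : (v : V) ∈ s(u,w) := h ▸ Sym2.mem_mk_right u v
  simp only [Sym2.mem_iff] at hv
  rcases hv with rfl | rfl
  · exact absurd rfl (pm_adj hM' h1).ne
  · rfl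

/-- Two distinct edges of a PM have all four endpoints distinct. -/
lemma pm_four_ne (hM : IsPM G M) {a b c d : V}
    (hab : s(a,b) ∈ M) (hcd : s(c,d) ∈ M) (hne : s(a,b) ≠ s(c,d)) :
    a ≠ b ∧ c ≠ d ∧ a ≠ c ∧ a ≠ d ∧ b ≠ c ∧ b ≠ d := by
  refine ⟨(pm_adj hM hab).ne, (pm_adj hM hcd).ne, ?_, ?_, ?_, ?_⟩
  · intro h; exact hM.2.1 _ hab _ hcd hne a (by simp) (by simp [h])
  · intro h; exact hM.2.1 _ hab _ hcd hne a (by simp) (by simp [h])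
  · intro h; exact hM.2.1 _ hab _ hcd hne b (by simp) (by simp [h])
  · intro h; exact hM.2.1 _ hab _ hcd hne b (by simp) (by simp [h])

/-- If the star condition fails for edges `s(a,b), s(c,d)` of `M`, then
`M \ {s(a,b), s(c,d)}` is a forcing set. -/
lemma forcing_pair (hM : IsPM G M) {a b c d : V}
    (hab : s(a,b) ∈ M) (hcd : s(c,d) ∈ M) (hne : s(a,b) ≠ s(c,d))
    (hf1 : ¬ (G.Adj a c ∧ G.Adj b d)) (hf2 : ¬ (G.Adj a d ∧ G.Adj b c)) :
    IsForcingSet G M (M \ {s(a,b), s(c,d)}) := by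
  have hR : ({s(a,b), s(c,d)} : Set (Sym2 V)) ⊆ M := by
    rintro e (rfl | rfl) <;> assumption
  obtain ⟨hab', hcd', hac, had, hbc, hbd⟩ := pm_four_ne hM hab hcd hne
  refine ⟨Set.diff_subset, fun M' hM' hsub => ?_⟩
  have hpart : ∀ v t : V, s(v,t) ∈ M' → (v = a ∨ v = b ∨ v = c ∨ v = d) →
      (t = a ∨ t = b ∨ t = c ∨ t = d) := by
    intro v t hvt hv
    by_contra ht
    push_neg at ht
    refine partner_in_bad hM hM' hR hsub hvt ?_ ?_
    · rcases hv with h | h | h | h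
      · exact ⟨s(a,b), by simp, by simp [h]⟩
      · exact ⟨s(a,b), by simp, by simp [h]⟩
      · exact ⟨s(c,d), by simp, by simp [h]⟩
      · exact ⟨s(c,d), by simp, by simp [h]⟩
    · rintro ⟨e, (rfl | rfl), hte⟩ <;> simp only [Sym2.mem_iff] at hte <;> tauto
  obtain ⟨t, hat⟩ := pm_partner hM' a
  have hta : t ≠ a := (pm_adj hM' hat).ne'
  have ht4 := hpart a t hat (by tauto)
  have htb : t = b := by
    rcases ht4 with h | h | h | h
    · exact absurd h hta
    · exact h
    · -- a matched to c: derive b matched to d, contradiction with hf1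
      exfalso
      rw [h] at hat
      obtain ⟨t', hbt'⟩ := pm_partner hM' b
      have g1 : t' ≠ b := (pm_adj hM' hbt').ne'
      have g2 : t' ≠ a := by
        intro hh; rw [hh] at hbt'
        have hba : s(a,b) ∈ M' := by rwa [Sym2.eq_swap] at hbt'
        exact hbc (pm_partner_unique hM' hba hat)
      have g3 : t' ≠ c := by
        intro hh; rw [hh] at hbt'
        have h1 : s(c,b) ∈ M' := by rwa [Sym2.eq_swap] at hbt'
        have h2 : s(c,a) ∈ M' := by rwa [Sym2.eq_swap] at hat
        exact hab' (pm_partner_unique hM' h1 h2).symm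
      have := hpart b t' hbt' (by tauto)
      have ht'd : t' = d := by tauto
      rw [ht'd] at hbt'
      exact hf1 ⟨pm_adj hM' hat, pm_adj hM' hbt'⟩
    · -- a matched to d: contradiction with hf2
      exfalso
      rw [h] at hat
      obtain ⟨t', hbt'⟩ := pm_partner hM' b
      have g1 : t' ≠ b := (pm_adj hM' hbt').ne'
      have g2 : t' ≠ a := by
        intro hh; rw [hh] at hbt'
        have hba : s(a,b) ∈ M' := by rwa [Sym2.eq_swap] at hbt'
        exact hbd (pm_partner_unique hM' hba hat)
      have g3 : t' ≠ d := by
        intro hh; rw [hh] at hbt'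
        have h1 : s(d,b) ∈ M' := by rwa [Sym2.eq_swap] at hbt'
        have h2 : s(d,a) ∈ M' := by rwa [Sym2.eq_swap] at hat
        exact hab' (pm_partner_unique hM' h1 h2).symm
      have := hpart b t' hbt' (by tauto)
      have ht'c : t' = c := by tauto
      rw [ht'c] at hbt'
      exact hf2 ⟨pm_adj hM' hat, pm_adj hM' hbt'⟩
  rw [htb] at hat
  -- now a matched to b in M'; show c matched to d
  obtain ⟨t', hct'⟩ := pm_partner hM' c
  have g1 : t' ≠ c := (pm_adj hM' hct').ne'
  have g2 : t' ≠ a := by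
    intro hh; rw [hh] at hct'
    have h1 : s(a,c) ∈ M' := by rwa [Sym2.eq_swap] at hct'
    exact hbc (pm_partner_unique hM' hat h1)
  have g3 : t' ≠ b := by
    intro hh; rw [hh] at hct'
    have h1 : s(b,c) ∈ M' := by rwa [Sym2.eq_swap] at hct'
    have h2 : s(b,a) ∈ M' := by rwa [Sym2.eq_swap] at hat
    exact hac (pm_partner_unique hM' h2 h1)
  have := hpart c t' hct' (by tauto)
  have ht'd : t' = d := by tauto
  rw [ht'd] at hct'
  refine pm_sub_eq hM hM' (fun e he => ?_)
  by_cases h1 : e = s(a,b)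
  · exact h1 ▸ hat
  by_cases h2 : e = s(c,d)
  · exact h2 ▸ hct'
  · exact hsub ⟨he, by simp [h1, h2]⟩

end Forcing

section Count
variable {V : Type*} [Fintype V] {G : SimpleGraph V} {M : Set (Sym2 V)} {n : ℕ}

lemma pm_ncard (hcard : Fintype.card V = 2 * n) (hM : IsPM G M) : M.ncard = n := by
  classical
  choose f hfM hfmem using hM.2.2
  have hfin : M.Finite := Set.toFinite M
  have hsum : (Finset.univ : Finset V).card
      = ∑ e ∈ hfin.toFinset, (Finset.univ.filter (fun v => f v = e)).card := by
    refine Finset.card_eq_sum_card_fiberwise ?_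
    intro v _
    simpa [hfin.mem_toFinset] using hfM v
  have fib : ∀ e ∈ hfin.toFinset, (Finset.univ.filter (fun v => f v = e)).card = 2 := by
    intro e he
    rw [hfin.mem_toFinset] at he
    obtain ⟨a, b, rfl, hadj⟩ := pm_rep hM e he
    have hset : Finset.univ.filter (fun v => f v = s(a,b)) = {a, b} := by
      ext v
      simp only [Finset.mem_filter, Finset.mem_univ, true_and, Finset.mem_insert,
        Finset.mem_singleton]
      constructor
      · intro hv
        have := hfmem v
        rw [hv] at this
        simpa [Sym2.mem_iff] using this
      · rintro (rfl | rfl)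
        · exact pm_unique hM (hfM v) he (hfmem v) (by simp)
        · exact pm_unique hM (hfM v) he (hfmem v) (by simp)
    rw [hset, Finset.card_insert_of_notMem (by simpa using hadj.ne), Finset.card_singleton]
  rw [Finset.sum_congr rfl fib, Finset.sum_const, smul_eq_mul, Finset.card_univ, hcard] at hsum
  have : M.ncard = hfin.toFinset.card := Set.ncard_eq_toFinset_card M hfin
  omega

lemma indep_ncard_le (hcard : Fintype.card V = 2 * n) (hM : IsPM G M)
    {C : Set V} (hind : ∀ a ∈ C, ∀ b ∈ C, ¬ G.Adj a b) : C.ncard ≤ n := by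
  classical
  choose f hfM hfmem using hM.2.2
  have hinj : Set.InjOn f C := by
    intro a ha b hb hab
    by_contra hne
    obtain ⟨u, w, huw, hadj⟩ := pm_rep hM (f a) (hfM a)
    have hamem : a ∈ f a := hfmem a
    have hbmem : b ∈ f a := hab ▸ hfmem b
    rw [huw] at hamem hbmem
    simp only [Sym2.mem_iff] at hamem hbmem
    rcases hamem with rfl | rfl <;> rcases hbmem with rfl | rfl
    · exact hne rfl
    · exact hind a ha b hb hadj
    · exact hind b hb a ha hadj
    · exact hne rfl
  calc C.ncard = (f '' C).ncard := (Set.ncard_image_of_injOn hinj).symm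
  _ ≤ M.ncard := Set.ncard_le_ncard (by rintro e ⟨a, ha, rfl⟩; exact hfM a) (Set.toFinite M)
  _ = n := pm_ncard hcard hM

end Count

section Swaps
variable {V : Type*} {G : SimpleGraph V} {M : Set (Sym2 V)}

lemma sym2_ne_of_ne {a b c d : V} (h : a ≠ c ∧ a ≠ d ∨ b ≠ c ∧ b ≠ d) :
    s(a,b) ≠ s(c,d) := by
  intro hh
  rw [Sym2.eq_iff] at hh
  tauto

lemma swap2 (hM : IsPM G M) {a b c d : V}
    (hab : s(a,b) ∈ M) (hcd : s(c,d) ∈ M) (hne : s(a,b) ≠ s(c,d))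
    (h1 : G.Adj a c) (h2 : G.Adj b d) :
    ∃ M', IsPM G M' ∧ M \ {s(a,b), s(c,d)} ⊆ M' ∧ s(a,c) ∈ M' ∧ s(b,d) ∈ M' := by
  obtain ⟨nab, ncd, nac, nad, nbc, nbd⟩ := pm_four_ne hM hab hcd hne
  refine ⟨(M \ {s(a,b), s(c,d)}) ∪ {s(a,c), s(b,d)},
    swapPM hM (by rintro e (rfl | rfl) <;> assumption)
      (by rintro e (rfl | rfl) <;> simpa) ?_ ?_,
    fun e he => Or.inl he, Or.inr (by simp), Or.inr (by simp)⟩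
  · rintro e (rfl | rfl) f (rfl | rfl) hnef v hv hw <;>
      simp only [Sym2.mem_iff] at hv hw
    · exact hnef rfl
    · rcases hv with rfl | rfl <;> rcases hw with h | h
      · exact nab h
      · exact nad h
      · exact nbc h.symm
      · exact ncd h
    · rcases hv with rfl | rfl <;> rcases hw with h | h
      · exact nab h.symm
      · exact nbc h
      · exact nad h.symm
      · exact ncd h.symm
    · exact hnef rfl
  · intro v
    constructor
    · rintro ⟨e, (rfl | rfl), hv⟩ <;> simp only [Sym2.mem_iff] at hv <;>
        rcases hv with rfl | rfl <;>
        first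
          | exact ⟨_, Or.inl rfl, Sym2.mem_mk_left _ _⟩
          | exact ⟨_, Or.inl rfl, Sym2.mem_mk_right _ _⟩
          | exact ⟨_, Or.inr (rfl), Sym2.mem_mk_left _ _⟩
          | exact ⟨_, Or.inr (rfl), Sym2.mem_mk_right _ _⟩
    · rintro ⟨e, (rfl | rfl), hv⟩ <;> simp only [Sym2.mem_iff] at hv <;>
        rcases hv with rfl | rfl <;>
        first
          | exact ⟨_, Or.inl rfl, Sym2.mem_mk_left _ _⟩
          | exact ⟨_, Or.inl rfl, Sym2.mem_mk_right _ _⟩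
          | exact ⟨_, Or.inr (rfl), Sym2.mem_mk_left _ _⟩
          | exact ⟨_, Or.inr (rfl), Sym2.mem_mk_right _ _⟩

lemma swap3 (hM : IsPM G M) {a b c d e f : V}
    (h1 : s(a,b) ∈ M) (h2 : s(c,d) ∈ M) (h3 : s(e,f) ∈ M)
    (n12 : s(a,b) ≠ s(c,d)) (n13 : s(a,b) ≠ s(e,f)) (n23 : s(c,d) ≠ s(e,f))
    (a1 : G.Adj a c) (a2 : G.Adj b e) (a3 : G.Adj d f) :
    ∃ M', IsPM G M' ∧ M \ {s(a,b), s(c,d), s(e,f)} ⊆ M' ∧ s(a,c) ∈ M' := by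
  obtain ⟨nab, ncd, nac, nad, nbc, nbd⟩ := pm_four_ne hM h1 h2 n12
  obtain ⟨-, nef, nae, naf, nbe, nbf⟩ := pm_four_ne hM h1 h3 n13
  obtain ⟨-, -, nce, ncf, nde, ndf⟩ := pm_four_ne hM h2 h3 n23
  refine ⟨(M \ {s(a,b), s(c,d), s(e,f)}) ∪ {s(a,c), s(b,e), s(d,f)},
    swapPM hM (by rintro g (rfl | rfl | rfl) <;> assumption)
      (by rintro g (rfl | rfl | rfl) <;> simpa) ?_ ?_,
    fun g hg => Or.inl hg, Or.inr (by simp)⟩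
  · rintro g (rfl | rfl | rfl) g' (rfl | rfl | rfl) hne v hv hw <;>
      simp only [Sym2.mem_iff] at hv hw <;>
      first
        | exact hne rfl
        | (rcases hv with rfl | rfl <;> rcases hw with h | h <;>
            first
              | exact nab h | exact nab h.symm
              | exact ncd h | exact ncd h.symm
              | exact nef h | exact nef h.symm
              | exact nac h | exact nac h.symm
              | exact nad h | exact nad h.symm
              | exact nbc h | exact nbc h.symm
              | exact nbd h | exact nbd h.symm
              | exact nae h | exact nae h.symm
              | exact naf h | exact naf h.symm
              | exact nbe h | exact nbe h.symm
              | exact nbf h | exact nbf h.symm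
              | exact nce h | exact nce h.symm
              | exact ncf h | exact ncf h.symm
              | exact nde h | exact nde h.symm
              | exact ndf h | exact ndf h.symm)
  · intro v
    constructor
    · rintro ⟨g, (rfl | rfl | rfl), hv⟩ <;> simp only [Sym2.mem_iff] at hv <;>
        rcases hv with rfl | rfl <;>
        first
          | exact ⟨_, Or.inl rfl, Sym2.mem_mk_left _ _⟩
          | exact ⟨_, Or.inl rfl, Sym2.mem_mk_right _ _⟩
          | exact ⟨_, Or.inr (Or.inl rfl), Sym2.mem_mk_left _ _⟩
          | exact ⟨_, Or.inr (Or.inl rfl), Sym2.mem_mk_right _ _⟩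
          | exact ⟨_, Or.inr (Or.inr (rfl)), Sym2.mem_mk_left _ _⟩
          | exact ⟨_, Or.inr (Or.inr (rfl)), Sym2.mem_mk_right _ _⟩
    · rintro ⟨g, (rfl | rfl | rfl), hv⟩ <;> simp only [Sym2.mem_iff] at hv <;>
        rcases hv with rfl | rfl <;>
        first
          | exact ⟨_, Or.inl rfl, Sym2.mem_mk_left _ _⟩
          | exact ⟨_, Or.inl rfl, Sym2.mem_mk_right _ _⟩
          | exact ⟨_, Or.inr (Or.inl rfl), Sym2.mem_mk_left _ _⟩
          | exact ⟨_, Or.inr (Or.inl rfl), Sym2.mem_mk_right _ _⟩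
          | exact ⟨_, Or.inr (Or.inr (rfl)), Sym2.mem_mk_left _ _⟩
          | exact ⟨_, Or.inr (Or.inr (rfl)), Sym2.mem_mk_right _ _⟩

lemma swap4 (hM : IsPM G M) {a b c d e f g h : V}
    (h1 : s(a,b) ∈ M) (h2 : s(c,d) ∈ M) (h3 : s(e,f) ∈ M) (h4 : s(g,h) ∈ M)
    (n12 : s(a,b) ≠ s(c,d)) (n13 : s(a,b) ≠ s(e,f)) (n14 : s(a,b) ≠ s(g,h))
    (n23 : s(c,d) ≠ s(e,f)) (n24 : s(c,d) ≠ s(g,h)) (n34 : s(e,f) ≠ s(g,h))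
    (a1 : G.Adj a c) (a2 : G.Adj e g) (a3 : G.Adj b f) (a4 : G.Adj d h) :
    ∃ M', IsPM G M' ∧ M \ {s(a,b), s(c,d), s(e,f), s(g,h)} ⊆ M' ∧ s(a,c) ∈ M' := by
  obtain ⟨nab, ncd, nac, nad, nbc, nbd⟩ := pm_four_ne hM h1 h2 n12
  obtain ⟨-, nef, nae, naf, nbe, nbf⟩ := pm_four_ne hM h1 h3 n13
  obtain ⟨-, ngh, nag, nah, nbg, nbh⟩ := pm_four_ne hM h1 h4 n14
  obtain ⟨-, -, nce, ncf, nde, ndf⟩ := pm_four_ne hM h2 h3 n23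
  obtain ⟨-, -, ncg, nch, ndg, ndh⟩ := pm_four_ne hM h2 h4 n24
  obtain ⟨-, -, neg, neh, nfg, nfh⟩ := pm_four_ne hM h3 h4 n34
  refine ⟨(M \ {s(a,b), s(c,d), s(e,f), s(g,h)}) ∪ {s(a,c), s(e,g), s(b,f), s(d,h)},
    swapPM hM (by rintro x (rfl | rfl | rfl | rfl) <;> assumption)
      (by rintro x (rfl | rfl | rfl | rfl) <;> simpa) ?_ ?_,
    fun x hx => Or.inl hx, Or.inr (by simp)⟩
  · rintro x (rfl | rfl | rfl | rfl) y (rfl | rfl | rfl | rfl) hne v hv hw <;>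
      simp only [Sym2.mem_iff] at hv hw <;>
      first
        | exact hne rfl
        | (rcases hv with rfl | rfl <;> rcases hw with hq | hq <;>
            first
              | exact nab hq | exact nab hq.symm
              | exact ncd hq | exact ncd hq.symm
              | exact nef hq | exact nef hq.symm
              | exact ngh hq | exact ngh hq.symm
              | exact nac hq | exact nac hq.symm
              | exact nad hq | exact nad hq.symm
              | exact nbc hq | exact nbc hq.symm
              | exact nbd hq | exact nbd hq.symm
              | exact nae hq | exact nae hq.symm
              | exact naf hq | exact naf hq.symm
              | exact nbe hq | exact nbe hq.symm
              | exact nbf hq | exact nbf hq.symm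
              | exact nag hq | exact nag hq.symm
              | exact nah hq | exact nah hq.symm
              | exact nbg hq | exact nbg hq.symm
              | exact nbh hq | exact nbh hq.symm
              | exact nce hq | exact nce hq.symm
              | exact ncf hq | exact ncf hq.symm
              | exact nde hq | exact nde hq.symm
              | exact ndf hq | exact ndf hq.symm
              | exact ncg hq | exact ncg hq.symm
              | exact nch hq | exact nch hq.symm
              | exact ndg hq | exact ndg hq.symm
              | exact ndh hq | exact ndh hq.symm
              | exact neg hq | exact neg hq.symm
              | exact neh hq | exact neh hq.symm
              | exact nfg hq | exact nfg hq.symm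
              | exact nfh hq | exact nfh hq.symm)
  · intro v
    constructor
    · rintro ⟨x, (rfl | rfl | rfl | rfl), hv⟩ <;> simp only [Sym2.mem_iff] at hv <;>
        rcases hv with rfl | rfl <;>
        first
          | exact ⟨_, Or.inl rfl, Sym2.mem_mk_left _ _⟩
          | exact ⟨_, Or.inl rfl, Sym2.mem_mk_right _ _⟩
          | exact ⟨_, Or.inr (Or.inl rfl), Sym2.mem_mk_left _ _⟩
          | exact ⟨_, Or.inr (Or.inl rfl), Sym2.mem_mk_right _ _⟩
          | exact ⟨_, Or.inr (Or.inr (Or.inl rfl)), Sym2.mem_mk_left _ _⟩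
          | exact ⟨_, Or.inr (Or.inr (Or.inl rfl)), Sym2.mem_mk_right _ _⟩
          | exact ⟨_, Or.inr (Or.inr (Or.inr (rfl))), Sym2.mem_mk_left _ _⟩
          | exact ⟨_, Or.inr (Or.inr (Or.inr (rfl))), Sym2.mem_mk_right _ _⟩
    · rintro ⟨x, (rfl | rfl | rfl | rfl), hv⟩ <;> simp only [Sym2.mem_iff] at hv <;>
        rcases hv with rfl | rfl <;>
        first
          | exact ⟨_, Or.inl rfl, Sym2.mem_mk_left _ _⟩
          | exact ⟨_, Or.inl rfl, Sym2.mem_mk_right _ _⟩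
          | exact ⟨_, Or.inr (Or.inl rfl), Sym2.mem_mk_left _ _⟩
          | exact ⟨_, Or.inr (Or.inl rfl), Sym2.mem_mk_right _ _⟩
          | exact ⟨_, Or.inr (Or.inr (Or.inl rfl)), Sym2.mem_mk_left _ _⟩
          | exact ⟨_, Or.inr (Or.inr (Or.inl rfl)), Sym2.mem_mk_right _ _⟩
          | exact ⟨_, Or.inr (Or.inr (Or.inr (rfl))), Sym2.mem_mk_left _ _⟩
          | exact ⟨_, Or.inr (Or.inr (Or.inr (rfl))), Sym2.mem_mk_right _ _⟩

end Swaps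

section L1
variable {V : Type*} [Fintype V] {G : SimpleGraph V} {M : Set (Sym2 V)} {n : ℕ}

lemma forcingNum_le_of (h : IsForcingSet G M S) : forcingNum G M ≤ S.ncard :=
  Nat.sInf_le ⟨S, h, rfl⟩

lemma star_forcingNum (hcard : Fintype.card V = 2 * n) (hstar : StarCond G)
    (hM : IsPM G M) : forcingNum G M = n - 1 := by
  have hMn : M.ncard = n := pm_ncard hcard hM
  rcases Nat.eq_zero_or_pos n with hn | hn
  · -- n = 0 : empty graph
    subst hn
    have hMe : M = ∅ := (Set.ncard_eq_zero (Set.toFinite M)).mp hMn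
    have h0 : IsForcingSet G M ∅ := by
      refine ⟨Set.empty_subset _, fun M' hM' _ => pm_sub_eq hM hM' ?_⟩
      rw [hMe]; exact Set.empty_subset _
    have := forcingNum_le_of h0
    simp only [Set.ncard_empty] at this
    omega
  · have hMne : M.Nonempty := Set.nonempty_of_ncard_ne_zero (by omega)
    obtain ⟨e, he⟩ := hMne
    obtain ⟨a, b, rfl, -⟩ := pm_rep hM e he
    have hle : forcingNum G M ≤ n - 1 := by
      have := forcingNum_le_of (forcing_erase hM he)
      rwa [Set.ncard_diff_singleton_of_mem he, hMn] at this
    have hge : ∀ k ∈ {k | ∃ S, IsForcingSet G M S ∧ S.ncard = k}, n - 1 ≤ k := by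
      rintro k ⟨S, hS, rfl⟩
      by_contra hcon
      push_neg at hcon
      have hn2 : 2 ≤ n := by omega
      have hSM : S ⊆ M := hS.1
      have hdiff : (M \ S).ncard = n - S.ncard := by
        rw [Set.ncard_diff hSM (Set.toFinite S), hMn]
      have h2 : 1 < (M \ S).ncard := by omega
      obtain ⟨e1, he1, e2, he2, hne12⟩ := (Set.one_lt_ncard (Set.toFinite _)).mp h2
      obtain ⟨a1, b1, rfl, -⟩ := pm_rep hM e1 he1.1
      obtain ⟨c1, d1, rfl, -⟩ := pm_rep hM e2 he2.1
      have key : ∀ c d : V, s(c,d) ∈ M → s(c,d) ∉ S → s(a1,b1) ≠ s(c,d) →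
          G.Adj a1 c → G.Adj b1 d → False := by
        intro c d hcd hcdS hnecd had1 had2
        obtain ⟨nab, ncd', nac, nad, nbc, nbd⟩ := pm_four_ne hM he1.1 hcd hnecd
        obtain ⟨M', hM', hsub', hac, -⟩ := swap2 hM he1.1 hcd hnecd had1 had2
        have hMM : M' = M := by
          refine hS.2 M' hM' (fun x hx => hsub' ⟨hSM hx, ?_⟩)
          rintro (rfl | rfl)
          · exact he1.2 hx
          · exact hcdS hx
        rw [hMM] at hac
        have := pm_unique hM hac he1.1 (Sym2.mem_mk_left a1 c) (Sym2.mem_mk_left a1 b1)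
        rw [Sym2.congr_right] at this
        exact nbc this.symm
      rcases hstar M hM a1 b1 c1 d1 he1.1 he2.1 hne12 with ⟨h1, h2⟩ | ⟨h1, h2⟩
      · exact key c1 d1 he2.1 he2.2 hne12 h1 h2
      · refine key d1 c1 ?_ ?_ ?_ h1 h2
        · rw [show s(d1,c1) = s(c1,d1) from Sym2.eq_swap]; exact he2.1
        · rw [show s(d1,c1) = s(c1,d1) from Sym2.eq_swap]; exact he2.2
        · rw [show s(d1,c1) = s(c1,d1) from Sym2.eq_swap]; exact hne12
    refine le_antisymm hle (le_csInf ⟨n - 1, M \ {s(a,b)}, forcing_erase hM he, ?_⟩ hge)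
    rw [Set.ncard_diff_singleton_of_mem he, hMn]

lemma minForcing_iff_star (hcard : Fintype.card V = 2 * n) (hPM : ∃ M, IsPM G M) :
    minForcing G = n - 1 ↔ StarCond G := by
  constructor
  · intro hmf
    by_contra hns
    unfold StarCond at hns
    push_neg at hns
    obtain ⟨M, hM, a, b, c, d, hab, hcd, hne, hf1, hf2⟩ := hns
    have hf1' : ¬ (G.Adj a c ∧ G.Adj b d) := fun ⟨u, v⟩ => hf1 u v
    have hf2' : ¬ (G.Adj a d ∧ G.Adj b c) := fun ⟨u, v⟩ => hf2 u v
    have hMn : M.ncard = n := pm_ncard hcard hM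
    have hpair : ({s(a,b), s(c,d)} : Set (Sym2 V)).ncard = 2 :=
      Set.ncard_pair hne
    have hsub : ({s(a,b), s(c,d)} : Set (Sym2 V)) ⊆ M := by
      rintro e (rfl | rfl) <;> assumption
    have hn2 : 2 ≤ n := by
      calc 2 = ({s(a,b), s(c,d)} : Set (Sym2 V)).ncard := hpair.symm
      _ ≤ M.ncard := Set.ncard_le_ncard hsub (Set.toFinite M)
      _ = n := hMn
    have hforce := forcing_pair hM hab hcd hne hf1' hf2'
    have h1 : forcingNum G M ≤ n - 2 := by
      have := forcingNum_le_of hforce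
      rwa [Set.ncard_diff hsub (Set.toFinite _), hMn, hpair] at this
    have h2 : minForcing G ≤ n - 2 := by
      refine le_trans (Nat.sInf_le ⟨M, hM, rfl⟩) h1
    omega
  · intro hstar
    obtain ⟨M0, hM0⟩ := hPM
    refine le_antisymm (Nat.sInf_le ⟨M0, hM0, star_forcingNum hcard hstar hM0⟩) ?_
    refine le_csInf ⟨n - 1, M0, hM0, star_forcingNum hcard hstar hM0⟩ ?_
    rintro k ⟨M, hM, rfl⟩
    exact (star_forcingNum hcard hstar hM).ge

end L1

section L2
variable {V : Type*} {G : SimpleGraph V} {M : Set (Sym2 V)}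

lemma lemma_swap (hstar : StarCond G) (hM : IsPM G M) {a b u : V}
    (hab : s(a,b) ∈ M) (hua : ¬ G.Adj u a) (hne : u ≠ a) :
    G.Adj u b ∧ ∃ M', IsPM G M' ∧ s(u,b) ∈ M' := by
  obtain ⟨w, huw⟩ := pm_partner hM u
  have hub : u ≠ b := by
    rintro rfl
    exact hua (pm_adj hM hab).symm
  have hedne : s(u,w) ≠ s(a,b) := sym2_ne_of_ne (Or.inl ⟨hne, hub⟩)
  rcases hstar M hM u w a b huw hab hedne with ⟨h1, -⟩ | ⟨h1, h2⟩
  · exact absurd h1 hua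
  refine ⟨h1, ?_⟩
  by_cases hwb : w = b
  · exact ⟨M, hM, hwb ▸ huw⟩
  · have hwu : s(w,u) ∈ M := by rwa [Sym2.eq_swap] at huw
    have hne2 : s(w,u) ≠ s(a,b) := sym2_ne_of_ne (Or.inr ⟨hne, hub⟩)
    obtain ⟨M', hM', -, -, hub'⟩ := swap2 hM hwu hab hne2 h2 h1
    exact ⟨M', hM', hub'⟩

lemma walk_to_pm (hstar : StarCond G) (b : V) {a u : V} (w : Gᶜ.Walk a u) :
    ∀ M, IsPM G M → s(a,b) ∈ M →
      u = a ∨ (G.Adj u b ∧ ∃ M', IsPM G M' ∧ s(u,b) ∈ M') := by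
  induction w with
  | nil => exact fun M _ _ => Or.inl rfl
  | @cons x y z h p ih =>
    intro M hM hab
    have hyx : ¬ G.Adj y x ∧ y ≠ x := by
      rw [SimpleGraph.compl_adj] at h
      exact ⟨fun hh => h.2 hh.symm, fun hh => h.1 hh.symm⟩
    obtain ⟨hadj, M1, hM1, hyb⟩ := lemma_swap hstar hM hab hyx.1 hyx.2
    rcases ih M1 hM1 hyb with rfl | hres
    · exact Or.inr ⟨hadj, M1, hM1, hyb⟩
    · exact Or.inr hres

lemma star_to_cross (hstar : StarCond G) : CrossCond G := by
  intro M hM a b hab hreach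
  obtain ⟨w⟩ := hreach
  have hadj := pm_adj hM hab
  rcases walk_to_pm hstar b w M hM hab with h | ⟨h, -⟩
  · rw [h] at hadj
    exact G.irrefl hadj
  · exact G.irrefl h

lemma reach_of_not_adj {u v : V} (hne : u ≠ v) (h : ¬ G.Adj u v) : Gᶜ.Reachable u v :=
  ((SimpleGraph.compl_adj _ _ _).mpr ⟨hne, h⟩).reachable

lemma cross_to_star (hcross : CrossCond G) : StarCond G := by
  intro M hM a b c d hab hcd hne
  have hrab : ¬ Gᶜ.Reachable a b := hcross M hM a b hab
  have hrcd : ¬ Gᶜ.Reachable c d := hcross M hM c d hcd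
  obtain ⟨nab, ncd, nac, nad, nbc, nbd⟩ := pm_four_ne hM hab hcd hne
  by_cases h1 : G.Adj a c
  · by_cases h2 : G.Adj b d
    · exact Or.inl ⟨h1, h2⟩
    · -- b ≁ d : b,d same component
      have hrbd : Gᶜ.Reachable b d := reach_of_not_adj nbd h2
      refine Or.inr ⟨?_, ?_⟩
      · by_contra h3
        exact hrab ((reach_of_not_adj nad h3).trans hrbd.symm)
      · by_contra h3
        exact hrcd ((reach_of_not_adj nbc h3).symm.trans hrbd)
  · have hrac : Gᶜ.Reachable a c := reach_of_not_adj nac h1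
    refine Or.inr ⟨?_, ?_⟩
    · by_contra h3
      exact hrcd ((reach_of_not_adj nad h3).symm.trans hrac).symm
    · by_contra h3
      exact hrab (hrac.trans (reach_of_not_adj nbc h3).symm)

end L2

section L3
variable {V : Type*} {G : SimpleGraph V} {n : ℕ}

lemma setoid_to_cross (s : Setoid V) (h : ∀ u v : V, G.Adj u v ↔ ¬ s.r u v) :
    CrossCond G := by
  have walk_r : ∀ {u v : V}, Gᶜ.Walk u v → s.r u v := by
    intro u v w
    induction w with
    | nil => exact s.iseqv.refl _
    | @cons x y z hxy p ih =>
      have : s.r x y := by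
        by_contra hr
        rw [SimpleGraph.compl_adj] at hxy
        exact hxy.2 ((h x y).mpr hr)
      exact s.iseqv.trans this ih
  intro M hM a b hab hreach
  obtain ⟨w⟩ := hreach
  exact (h a b).mp (pm_adj hM hab) (walk_r w)

lemma walk_stay {A : Set V} (hcomp : ∀ a ∈ A, ∀ b ∉ A, G.Adj a b)
    {u v : V} (w : Gᶜ.Walk u v) : u ∈ A ↔ v ∈ A := by
  induction w with
  | nil => exact Iff.rfl
  | @cons x y z hxy p ih =>
    rw [SimpleGraph.compl_adj] at hxy
    refine Iff.trans ⟨fun hx => ?_, fun hy => ?_⟩ ih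
    · by_contra hy
      exact hxy.2 (hcomp x hx y hy)
    · by_contra hx
      exact hxy.2 (hcomp y hy x hx).symm

lemma knn_to_cross [Fintype V] (hcard : Fintype.card V = 2 * n)
    (hknn : InKnnPlus n G) : CrossCond G := by
  classical
  obtain ⟨A, hAn, hind, hcomp⟩ := hknn
  intro M hM a b hab hreach
  -- every edge of M meets A
  choose f hfM hfmem using hM.2.2
  have hinj : Set.InjOn f A := by
    intro a1 ha1 a2 ha2 hfa
    by_contra hne
    obtain ⟨u, w, huw, hadj⟩ := pm_rep hM (f a1) (hfM a1)
    have h1 : a1 ∈ f a1 := hfmem a1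
    have h2 : a2 ∈ f a1 := hfa ▸ hfmem a2
    rw [huw] at h1 h2
    simp only [Sym2.mem_iff] at h1 h2
    rcases h1 with rfl | rfl <;> rcases h2 with rfl | rfl
    · exact hne rfl
    · exact hind a1 ha1 a2 ha2 hadj
    · exact hind a2 ha2 a1 ha1 hadj
    · exact hne rfl
  have himg : f '' A = M := by
    refine Set.eq_of_subset_of_ncard_le (by rintro e ⟨a0, ha0, rfl⟩; exact hfM a0) ?_
      (Set.toFinite M)
    rw [Set.ncard_image_of_injOn hinj, hAn, pm_ncard hcard hM]
  have hmeet : ∃ v ∈ A, v ∈ s(a,b) := by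
    have : s(a,b) ∈ f '' A := himg ▸ hab
    obtain ⟨v, hv, hfv⟩ := this
    exact ⟨v, hv, hfv ▸ hfmem v⟩
  have hadj := pm_adj hM hab
  have hiff := walk_stay hcomp hreach.some
  obtain ⟨v, hvA, hv⟩ := hmeet
  simp only [Sym2.mem_iff] at hv
  rcases hv with rfl | rfl
  · have hbA : b ∉ A := fun hb => hind v hvA b hb hadj
    exact hbA (hiff.mp hvA)
  · have haA : a ∉ A := fun ha => hind a ha v hvA hadj
    exact haA (hiff.mpr hvA)

lemma cross_to_rhs [Fintype V] (hcard : Fintype.card V = 2 * n)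
    (hPM : ∃ M, IsPM G M) (hcross : CrossCond G) :
    (∃ s : Setoid V, (∀ u v : V, G.Adj u v ↔ ¬ s.r u v) ∧
        ∀ v : V, {u | s.r u v}.ncard ≤ n) ∨ InKnnPlus n G := by
  classical
  by_cases hmp : ∀ u v : V, G.Adj u v → ¬ Gᶜ.Reachable u v
  · left
    refine ⟨⟨Gᶜ.Reachable, ⟨fun _ => Reachable.refl _, fun h => h.symm,
      fun h1 h2 => h1.trans h2⟩⟩, fun u v => ⟨fun h => hmp u v h, fun h => ?_⟩,
      fun v => ?_⟩
    · by_contra hadj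
      rcases eq_or_ne u v with rfl | hne
      · exact h (Reachable.refl u)
      · exact h (reach_of_not_adj hne hadj)
    · obtain ⟨M0, hM0⟩ := hPM
      refine indep_ncard_le hcard hM0 (fun a ha b hb hadj => ?_)
      exact hmp a b hadj (Reachable.trans ha (Reachable.symm hb))
  · right
    push_neg at hmp
    obtain ⟨x, z, hxz, hreach⟩ := hmp
    obtain ⟨M, hM⟩ := hPM
    have hxzM : s(x,z) ∉ M := fun h => hcross M hM x z h hreach
    obtain ⟨x', hxx'⟩ := pm_partner hM x
    obtain ⟨z', hzz'⟩ := pm_partner hM z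
    have hxzn : x ≠ z := hxz.ne
    have hx'z : x' ≠ z := by
      rintro rfl
      exact hxzM hxx'
    have hz'x : z' ≠ x := by
      rintro rfl
      exact hxzM (by rwa [Sym2.eq_swap] at hzz')
    have hedne : s(x,x') ≠ s(z,z') := sym2_ne_of_ne (Or.inl ⟨hxzn, fun h => hz'x h.symm⟩)
    have hxx'n : x ≠ x' := (pm_adj hM hxx').ne
    have hzz'n : z ≠ z' := (pm_adj hM hzz').ne
    have hx'z' : x' ≠ z' := by
      rintro rfl
      exact hedne (pm_unique hM hxx' hzz' (Sym2.mem_mk_right x x') (Sym2.mem_mk_right z x'))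
    by_cases hax'z' : G.Adj x' z'
    · -- case 1 :直接 swap
      exfalso
      obtain ⟨M', hM', -, hxzM', -⟩ := swap2 hM hxx' hzz' hedne hxz hax'z'
      exact hcross M' hM' x z hxzM' hreach
    -- case 2 : x', z' in a common co-component A
    have hx'z'r : Gᶜ.Reachable x' z' := reach_of_not_adj hx'z' hax'z'
    set A : Set V := {v | Gᶜ.Reachable x' v} with hAdef
    have hx'A : x' ∈ A := Reachable.refl x'
    have hz'A : z' ∈ A := hx'z'r
    have hxA : x ∉ A := fun h => hcross M hM x x' hxx' h.symm
    have hzA : z ∉ A := fun h => hcross M hM z z' hzz' (Reachable.trans h.symm hx'z'r)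
    have hAout : ∀ a ∈ A, ∀ b, b ∉ A → G.Adj a b := by
      intro a ha b hb
      have hne : a ≠ b := by rintro rfl; exact hb ha
      by_contra hadj
      exact hb (Reachable.trans ha (reach_of_not_adj hne hadj))
    have hone : ∀ u w : V, s(u,w) ∈ M → u ∈ A → w ∉ A := by
      intro u w huw hu hw
      exact hcross M hM u w huw (Reachable.trans hu.symm hw)
    have hpartner : ∀ u w u' w' : V, s(u,u') ∈ M → s(w,w') ∈ M → u' = w → u ≠ w' → False := by
      intro u w u' w' h1 h2 he hne
      rw [he] at h1
      have h1' : s(w,u) ∈ M := by rwa [Sym2.eq_swap] at h1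
      exact hne (pm_partner_unique hM h1' h2)
    have main3 : ∀ u w : V, s(u,w) ∈ M → u ≠ x → u ≠ z → w ≠ x → w ≠ z →
        G.Adj x' u → G.Adj z' w → False := by
      intro u w huw hux huz hwx hwz hadj1 hadj2
      have n13 : s(x,x') ≠ s(u,w) := sym2_ne_of_ne (Or.inl ⟨hux.symm, hwx.symm⟩)
      have n23 : s(z,z') ≠ s(u,w) := sym2_ne_of_ne (Or.inl ⟨huz.symm, hwz.symm⟩)
      obtain ⟨M', hM', -, hxzM'⟩ := swap3 hM hxx' hzz' huw hedne n13 n23 hxz hadj1 hadj2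
      exact hcross M' hM' x z hxzM' hreach
    by_cases hall : ∀ e ∈ M, ∃ v ∈ A, v ∈ e
    · by_cases hind : ∀ a ∈ A, ∀ b ∈ A, ¬ G.Adj a b
      · -- the good case : A works
        refine ⟨A, ?_, hind, fun a ha b hb => hAout a ha b hb⟩
        choose f hfM hfmem using hM.2.2
        have hinj : Set.InjOn f A := by
          intro a1 ha1 a2 ha2 hfa
          by_contra hne
          obtain ⟨u, w, huw, hadj⟩ := pm_rep hM (f a1) (hfM a1)
          have h1 : a1 ∈ f a1 := hfmem a1
          have h2 : a2 ∈ f a1 := hfa ▸ hfmem a2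
          rw [huw] at h1 h2
          simp only [Sym2.mem_iff] at h1 h2
          rcases h1 with rfl | rfl <;> rcases h2 with rfl | rfl
          · exact hne rfl
          · exact hind a1 ha1 a2 ha2 hadj
          · exact hind a2 ha2 a1 ha1 hadj
          · exact hne rfl
        have himg : f '' A = M := by
          refine subset_antisymm (by rintro e ⟨a0, ha0, rfl⟩; exact hfM a0) ?_
          intro e he
          obtain ⟨v, hvA, hve⟩ := hall e he
          have : f v = e := pm_unique hM (hfM v) he (hfmem v) hve
          exact ⟨v, hvA, this⟩
        calc A.ncard = (f '' A).ncard := (Set.ncard_image_of_injOn hinj).symm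
        _ = M.ncard := by rw [himg]
        _ = n := pm_ncard hcard hM
      · -- A has an internal edge : contradiction
        exfalso
        push_neg at hind
        obtain ⟨p, hpA, q, hqA, hpq⟩ := hind
        obtain ⟨p', hpp'⟩ := pm_partner hM p
        obtain ⟨q', hqq'⟩ := pm_partner hM q
        have hp'A : p' ∉ A := hone p p' hpp' hpA
        have hq'A : q' ∉ A := hone q q' hqq' hqA
        have hpqn : p ≠ q := hpq.ne
        have hpx : p ≠ x := fun h => hxA (h ▸ hpA)
        have hpz : p ≠ z := fun h => hzA (h ▸ hpA)
        have hqx : q ≠ x := fun h => hxA (h ▸ hqA)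
        have hqz : q ≠ z := fun h => hzA (h ▸ hqA)
        have hpe : s(p,p') ≠ s(q,q') :=
          sym2_ne_of_ne (Or.inl ⟨hpqn, fun h => hq'A (h ▸ hpA)⟩)
        by_cases hp1 : p = x'
        · by_cases hq1 : q = z'
          · rw [hp1, hq1] at hpq
            exact hax'z' hpq
          · -- β1 : p = x', q ∉ {x', z'}
            have hqx' : q ≠ x' := fun h => hpqn (hp1.trans h.symm)
            have hq'x : q' ≠ x := fun h => hpartner q x q' x' hqq' hxx' h hqx'
            have hq'z : q' ≠ z := fun h => hpartner q z q' z' hqq' hzz' h hq1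
            exact main3 q q' hqq' hqx hqz hq'x hq'z (hp1 ▸ hpq)
              (hAout z' hz'A q' hq'A)
        · by_cases hp2 : p = z'
          · -- β2 : p = z', q ∉ {x', z'}
            have hqx' : q ≠ x' := by
              rintro rfl
              exact hax'z' (hp2 ▸ hpq).symm
            have hqz' : q ≠ z' := fun h => hpqn ((h.trans hp2.symm).symm)
            have hq'x : q' ≠ x := fun h => hpartner q x q' x' hqq' hxx' h hqx'
            have hq'z : q' ≠ z := fun h => hpartner q z q' z' hqq' hzz' h hqz'
            have hq'q : s(q',q) ∈ M := by rwa [Sym2.eq_swap] at hqq'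
            exact main3 q' q hq'q hq'x hq'z hqx hqz (hAout x' hx'A q' hq'A)
              (hp2 ▸ hpq)
          · by_cases hq2 : q = x'
            · -- β3 : q = x', p ∉ {x', z'}
              have hp'x : p' ≠ x := fun h => hpartner p x p' x' hpp' hxx' h hp1
              have hp'z : p' ≠ z := fun h => hpartner p z p' z' hpp' hzz' h hp2
              exact main3 p p' hpp' hpx hpz hp'x hp'z (hq2 ▸ hpq.symm)
                (hAout z' hz'A p' hp'A)
            · by_cases hq3 : q = z'
              · -- β4 : q = z', p ∉ {x', z'}
                have hp'x : p' ≠ x := fun h => hpartner p x p' x' hpp' hxx' h hp1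
                have hp'z : p' ≠ z := fun h => hpartner p z p' z' hpp' hzz' h hp2
                have hp'p : s(p',p) ∈ M := by rwa [Sym2.eq_swap] at hpp'
                exact main3 p' p hp'p hp'x hp'z hpx hpz (hAout x' hx'A p' hp'A)
                  (hq3 ▸ hpq.symm)
              · -- γ : 4-swap
                have hp'x : p' ≠ x := fun h => hpartner p x p' x' hpp' hxx' h hp1
                have hp'z : p' ≠ z := fun h => hpartner p z p' z' hpp' hzz' h hp2
                have hq'x : q' ≠ x := fun h => hpartner q x q' x' hqq' hxx' h hq2
                have hq'z : q' ≠ z := fun h => hpartner q z q' z' hqq' hzz' h hq3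
                have n13 : s(x,x') ≠ s(p,p') :=
                  sym2_ne_of_ne (Or.inl ⟨hpx.symm, hp'x.symm⟩)
                have n14 : s(x,x') ≠ s(q,q') :=
                  sym2_ne_of_ne (Or.inl ⟨hqx.symm, hq'x.symm⟩)
                have n23 : s(z,z') ≠ s(p,p') :=
                  sym2_ne_of_ne (Or.inl ⟨hpz.symm, hp'z.symm⟩)
                have n24 : s(z,z') ≠ s(q,q') :=
                  sym2_ne_of_ne (Or.inl ⟨hqz.symm, hq'z.symm⟩)
                obtain ⟨M', hM', -, hxzM'⟩ := swap4 hM hxx' hzz' hpp' hqq'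
                  hedne n13 n14 n23 n24 hpe hxz hpq
                  (hAout x' hx'A p' hp'A) (hAout z' hz'A q' hq'A)
                exact hcross M' hM' x z hxzM' hreach
    · -- case 2a : an edge of M avoids A
      exfalso
      push_neg at hall
      obtain ⟨e, heM, hce⟩ := hall
      obtain ⟨c, d, rfl, hadjcd⟩ := pm_rep hM e heM
      have hcA : c ∉ A := fun h => hce c h (Sym2.mem_mk_left c d)
      have hdA : d ∉ A := fun h => hce d h (Sym2.mem_mk_right c d)
      have hcx : c ≠ x := by
        rintro rfl
        have h := pm_partner_unique hM heM hxx'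
        exact hdA (h ▸ hx'A)
      have hcz : c ≠ z := by
        rintro rfl
        have h := pm_partner_unique hM heM hzz'
        exact hdA (h ▸ hz'A)
      have hdx : d ≠ x := by
        rintro rfl
        have hdc : s(d,c) ∈ M := by rwa [Sym2.eq_swap] at heM
        have h := pm_partner_unique hM hdc hxx'
        exact hcA (h ▸ hx'A)
      have hdz : d ≠ z := by
        rintro rfl
        have hdc : s(d,c) ∈ M := by rwa [Sym2.eq_swap] at heM
        have h := pm_partner_unique hM hdc hzz'
        exact hcA (h ▸ hz'A)
      exact main3 c d heM hcx hcz hdx hdz (hAout x' hx'A c hcA) (hAout z' hz'A d hdA)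

end L3

/-- Theorem 3.3. -/
theorem stmt7 {V : Type*} [Fintype V] (n : ℕ)
    (G : SimpleGraph V) (hcard : Fintype.card V = 2 * n)
    (hPM : ∃ M, IsPM G M) :
    minForcing G = n - 1 ↔
      ((∃ s : Setoid V, (∀ u v : V, G.Adj u v ↔ ¬ s.r u v) ∧
          ∀ v : V, {u | s.r u v}.ncard ≤ n) ∨
        InKnnPlus n G) := by
  constructor
  · intro h
    have hstar := (minForcing_iff_star hcard hPM).mp h
    exact cross_to_rhs hcard hPM (star_to_cross hstar)
  · intro h
    refine (minForcing_iff_star hcard hPM).mpr (cross_to_star ?_)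
    rcases h with ⟨s, hs, -⟩ | hknn
    · exact setoid_to_cross s hs
    · exact knn_to_cross hcard hknn
end

section
/- Let G be a complete multipartite graph with 2n vertices (n ≥ 1) having at least two parts, such that every partite set has size at most n. Then G has a perfect matching. -/
open SimpleGraph

open scoped Classical in
lemma key_pm {V : Type*} (G : SimpleGraph V) (s : Setoid V)
    (hcm : ∀ u v : V, G.Adj u v ↔ ¬ s.r u v) :
    ∀ m : ℕ, ∀ T : Finset V, T.card = 2 * m →
      (∀ w ∈ T, (T.filter (fun u => s.r u w)).card ≤ m) →
      ∃ M, IsPMOn G (↑T) M := by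
  classical
  intro m
  induction m with
  | zero =>
    intro T hT _
    have hTe : T = ∅ := Finset.card_eq_zero.mp (by omega)
    subst hTe
    exact ⟨∅, by simp, by simp, by simp, by simp⟩
  | succ m ih =>
    intro T hT hfil
    have hTne : T.Nonempty := Finset.card_pos.mp (by omega)
    obtain ⟨u, hu, hmax⟩ := T.exists_max_image
      (fun w => (T.filter (fun x => s.r x w)).card) hTne
    have hcu : (T.filter (fun x => s.r x u)).card ≤ m + 1 := hfil u hu
    have h1 : ¬ T ⊆ T.filter (fun x => s.r x u) := by
      intro h
      have := Finset.card_le_card h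
      omega
    obtain ⟨v, hv, hvf⟩ := Finset.not_subset.mp h1
    have hvu : ¬ s.r v u := fun h => hvf (Finset.mem_filter.mpr ⟨hv, h⟩)
    have huv : u ≠ v := fun h => hvu (h ▸ s.refl' u)
    set T' := (T.erase u).erase v with hT'def
    have hvmem : v ∈ T.erase u := Finset.mem_erase.mpr ⟨fun h => huv h.symm, hv⟩
    have hT'card : T'.card = 2 * m := by
      rw [hT'def, Finset.card_erase_of_mem hvmem, Finset.card_erase_of_mem hu]
      omega
    have hT'sub : T' ⊆ T := (Finset.erase_subset _ _).trans (Finset.erase_subset _ _)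
    have hunotin : u ∉ T' := fun h => (Finset.mem_erase.mp (Finset.mem_of_mem_erase h)).1 rfl
    have hvnotin : v ∉ T' := fun h => (Finset.mem_erase.mp h).1 rfl
    have hfil' : ∀ w ∈ T', (T'.filter (fun x => s.r x w)).card ≤ m := by
      intro w hw
      have hwT : w ∈ T := hT'sub hw
      have hFw : (T.filter (fun x => s.r x w)).card ≤ m + 1 := hfil w hwT
      have hsub : T'.filter (fun x => s.r x w) ⊆
          ((T.filter (fun x => s.r x w)).erase u).erase v := by
        intro x hx
        obtain ⟨hx1, hx2⟩ := Finset.mem_filter.mp hx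
        refine Finset.mem_erase.mpr ⟨?_, Finset.mem_erase.mpr ⟨?_, Finset.mem_filter.mpr ⟨hT'sub hx1, hx2⟩⟩⟩
        · exact fun h => hvnotin (h ▸ hx1)
        · exact fun h => hunotin (h ▸ hx1)
      by_cases huw : s.r u w
      · -- u is in the filter over T, so erasing drops the card
        have hmem : u ∈ T.filter (fun x => s.r x w) := Finset.mem_filter.mpr ⟨hu, huw⟩
        have := Finset.card_le_card hsub
        have hle : (((T.filter (fun x => s.r x w)).erase u).erase v).card ≤
            ((T.filter (fun x => s.r x w)).erase u).card := Finset.card_erase_le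
        have := Finset.card_erase_of_mem hmem
        omega
      · by_cases hvw : s.r v w
        · have hmem : v ∈ T.filter (fun x => s.r x w) := Finset.mem_filter.mpr ⟨hv, hvw⟩
          have hmem' : v ∈ (T.filter (fun x => s.r x w)).erase u :=
            Finset.mem_erase.mpr ⟨fun h => huw (h ▸ hvw), hmem⟩
          have h2 := Finset.card_le_card hsub
          have h3 := Finset.card_erase_of_mem hmem'
          have h4 : ((T.filter (fun x => s.r x w)).erase u).card ≤
              (T.filter (fun x => s.r x w)).card := Finset.card_erase_le
          omega
        · -- neither u nor v related to w; show the filter over T has card ≤ m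
          by_contra hcon
          push_neg at hcon
          have hFw' : (T.filter (fun x => s.r x w)).card = m + 1 := by
            have h2 := Finset.card_le_card hsub
            have h4 : ((T.filter (fun x => s.r x w)).erase u).card ≤
                (T.filter (fun x => s.r x w)).card := Finset.card_erase_le
            have h5 : (((T.filter (fun x => s.r x w)).erase u).erase v).card ≤
                ((T.filter (fun x => s.r x w)).erase u).card := Finset.card_erase_le
            -- since u, v not in the filter, erasing doesn't change it
            have hunotF : u ∉ T.filter (fun x => s.r x w) := by
              simp only [Finset.mem_filter]; tauto
            have hvnotF : v ∉ T.filter (fun x => s.r x w) := by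
              simp only [Finset.mem_filter]; tauto
            have heq : (((T.filter (fun x => s.r x w)).erase u).erase v) =
                T.filter (fun x => s.r x w) := by
              rw [Finset.erase_eq_of_notMem
                (fun h => hvnotF (Finset.mem_of_mem_erase h)),
                Finset.erase_eq_of_notMem hunotF]
            -- and T'.filter ⊇ (T.filter).erase.erase? show equality instead
            have hsub2 : T.filter (fun x => s.r x w) ⊆ T'.filter (fun x => s.r x w) := by
              intro x hx
              obtain ⟨hx1, hx2⟩ := Finset.mem_filter.mp hx
              refine Finset.mem_filter.mpr ⟨?_, hx2⟩
              refine Finset.mem_erase.mpr ⟨?_, Finset.mem_erase.mpr ⟨?_, hx1⟩⟩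
              · exact fun h => hvnotF (h ▸ hx)
              · exact fun h => hunotF (h ▸ hx)
            have h6 := Finset.card_le_card hsub2
            omega
          have hcuw : (T.filter (fun x => s.r x u)).card = m + 1 := by
            have := hmax w hwT
            omega
          have hdisj : Disjoint (T.filter (fun x => s.r x u)) (T.filter (fun x => s.r x w)) := by
            rw [Finset.disjoint_left]
            intro x hx1 hx2
            exact huw (s.trans' (s.symm' (Finset.mem_filter.mp hx1).2)
              (Finset.mem_filter.mp hx2).2)
          have hcardun : (T.filter (fun x => s.r x u) ∪ T.filter (fun x => s.r x w)).card
              = 2 * (m + 1) := by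
            rw [Finset.card_union_of_disjoint hdisj, hcuw, hFw']; omega
          have hun : T.filter (fun x => s.r x u) ∪ T.filter (fun x => s.r x w) = T := by
            apply Finset.eq_of_subset_of_card_le
            · exact Finset.union_subset (Finset.filter_subset _ _) (Finset.filter_subset _ _)
            · omega
          have : v ∈ T.filter (fun x => s.r x u) ∪ T.filter (fun x => s.r x w) :=
            by rw [hun]; exact hv
          rcases Finset.mem_union.mp this with h | h
          · exact hvu (Finset.mem_filter.mp h).2
          · exact hvw (Finset.mem_filter.mp h).2
    obtain ⟨M', hM'⟩ := ih T' hT'card hfil'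
    obtain ⟨hM'e, hM'T, hM'd, hM'c⟩ := hM'
    refine ⟨insert s(u, v) M', ?_, ?_, ?_, ?_⟩
    · intro e he
      rcases he with he | he
      · subst he
        rw [SimpleGraph.mem_edgeSet, hcm]
        exact fun h => hvu (s.symm' h)
      · exact hM'e he
    · intro e he w hw
      rcases he with he | he
      · subst he
        rcases Sym2.mem_iff.mp hw with h | h
        · exact h ▸ hu
        · exact h ▸ hv
      · exact hT'sub (hM'T e he w hw)
    · intro e he f hf hef w hwe hwf
      rcases he with he | he
      · subst he
        rcases hf with hf | hf
        · exact hef hf.symm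
        · have hwT' : w ∈ T' := hM'T f hf w hwf
          rcases Sym2.mem_iff.mp hwe with h | h
          · exact hunotin (h ▸ hwT')
          · exact hvnotin (h ▸ hwT')
      · rcases hf with hf | hf
        · subst hf
          have hwT' : w ∈ T' := hM'T e he w hwe
          rcases Sym2.mem_iff.mp hwf with h | h
          · exact hunotin (h ▸ hwT')
          · exact hvnotin (h ▸ hwT')
        · exact hM'd e he f hf hef w hwe hwf
    · intro w hw
      have hwT : w ∈ T := hw
      by_cases h1 : w = u
      · exact ⟨s(u, v), Set.mem_insert _ _, by simp [h1]⟩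
      · by_cases h2 : w = v
        · exact ⟨s(u, v), Set.mem_insert _ _, by simp [h2]⟩
        · have : w ∈ T' := Finset.mem_erase.mpr ⟨h2, Finset.mem_erase.mpr ⟨h1, hwT⟩⟩
          obtain ⟨e, he, hwe⟩ := hM'c w this
          exact ⟨e, Set.mem_insert_of_mem _ he, hwe⟩

/-- complete multipartite graphs with small parts have perfect matchings. -/
theorem stmt8 {V : Type*} [Fintype V] (n : ℕ) (hn : 1 ≤ n)
    (G : SimpleGraph V) (hcard : Fintype.card V = 2 * n)
    (s : Setoid V) (hcm : ∀ u v : V, G.Adj u v ↔ ¬ s.r u v)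
    (hparts : ∃ u v : V, ¬ s.r u v)
    (hsize : ∀ v : V, {u | s.r u v}.ncard ≤ n) :
    ∃ M, IsPM G M := by
  classical
  have hfil : ∀ w ∈ (Finset.univ : Finset V),
      ((Finset.univ : Finset V).filter (fun u => s.r u w)).card ≤ n := by
    intro w _
    have := hsize w
    have heq : {u | s.r u w} = ↑((Finset.univ : Finset V).filter (fun u => s.r u w)) := by
      ext x; simp
    rw [heq, Set.ncard_coe_finset] at this
    exact this
  obtain ⟨M, hM1, hM2, hM3, hM4⟩ := key_pm G s hcm n Finset.univ
    (by rw [Finset.card_univ, hcard]) hfil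
  exact ⟨M, hM1, hM3, fun v => hM4 v (by simp)⟩
end

section
/- Let l ≥ 1 be an integer and let G be an (l−1)-extendable graph of order at least 2l+2. Then G is not l-extendable if and only if there exists a subset S ⊆ V(G) such that the induced subgraph G[S] contains l pairwise disjoint (independent) edges, every connected component of G−S is factor-critical, and o(G−S) = |S| − 2l + 2. -/
open SimpleGraph

/-!
If `G` is `l`-extendable, extend the `l` independent edges `N` of `G[S]` to a perfect matching;
its remaining edges perfectly match `G - V(N)`, so Tutte's condition for `G - V(N)` and the set
`S \ V(N)` gives `o(G - S) ≤ |S| - 2l`, ruling out `o(G - S) = |S| - 2l + 2`.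

Conversely, let `N` be a matching of `l` edges contained in no perfect matching, and `U` its `2l`
vertices. By `(l-1)`-extendability some perfect matching contains all edges of `N` but one, `xy`;
applied to `G - (U \ {x, y})`, Tutte's condition gives `o(G - U - T) ≤ |T| + 2` for all `T`.
Since `G - U` has no perfect matching, Tutte's theorem and parity give a `T` attaining `|T| + 2`.
Among those take `T` of maximum size (Gallai's argument): every component of `G - U - T` is odd
and factor-critical, since otherwise one more vertex, or one vertex of a component together with
a Tutte barrier of the rest of it, could be added to `T`. Then `S = U ∪ T` works.
-/

section

variable {V W W' : Type*} {G : SimpleGraph V} {H : SimpleGraph W} {H' : SimpleGraph W'}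

def EdgesDisjoint (M : Set (Sym2 V)) : Prop :=
  ∀ e ∈ M, ∀ f ∈ M, e ≠ f → ∀ v : V, v ∈ e → v ∉ f

theorem EdgesDisjoint.eq_of_mem {M : Set (Sym2 V)} (hM : EdgesDisjoint M) {v w w' : V}
    (h : s(v, w) ∈ M) (h' : s(v, w') ∈ M) : w = w' := by
  by_contra hne
  exact hM _ h _ h' (fun he => hne (Sym2.congr_right.mp he)) v (Sym2.mem_mk_left v w)
    (Sym2.mem_mk_left v w')

theorem exists_isPM_iff_exists_isPerfectMatching :
    (∃ M, IsPM H M) ↔ ∃ M : H.Subgraph, M.IsPerfectMatching := by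
  constructor
  · rintro ⟨M, hMH, hdisj, hcov⟩
    refine ⟨H.toSubgraph (fromEdgeSet M) fun v w h => hMH h.1, ?_⟩
    rw [Subgraph.isPerfectMatching_iff]
    intro v
    obtain ⟨e, he, hve⟩ := hcov v
    obtain ⟨w, rfl⟩ := Sym2.mem_iff_exists.mp hve
    refine ⟨w, ⟨he, (hMH he).ne⟩, fun w' hw' => ?_⟩
    exact EdgesDisjoint.eq_of_mem hdisj hw'.1 he
  · rintro ⟨M, hM⟩
    rw [Subgraph.isPerfectMatching_iff] at hM
    refine ⟨M.edgeSet, Subgraph.edgeSet_subset M, ?_, fun v => ?_⟩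
    · intro e he f hf hne v hve hvf
      obtain ⟨a, rfl⟩ := Sym2.mem_iff_exists.mp hve
      obtain ⟨b, rfl⟩ := Sym2.mem_iff_exists.mp hvf
      obtain ⟨w, -, hw⟩ := hM v
      exact hne (by rw [hw a he, hw b hf])
    · obtain ⟨w, hw, -⟩ := hM v
      exact ⟨s(v, w), hw, Sym2.mem_mk_left v w⟩

theorem IsPM.map_embedding {M : Set (Sym2 W)} (hM : IsPM H M) (f : H ↪g G) :
    IsPMOn G (Set.range f) (Sym2.map f '' M) := by
  obtain ⟨hMH, hdisj, hcov⟩ := hM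
  refine ⟨?_, ?_, ?_, ?_⟩
  · rintro _ ⟨e, he, rfl⟩
    induction e using Sym2.ind with
    | _ a b => exact f.map_adj_iff.mpr (hMH he)
  · rintro _ ⟨e, -, rfl⟩ w hw
    obtain ⟨a, -, rfl⟩ := Sym2.mem_map.mp hw
    exact ⟨a, rfl⟩
  · rintro _ ⟨e, he, rfl⟩ _ ⟨e', he', rfl⟩ hne _ hv hv'
    obtain ⟨a, ha, rfl⟩ := Sym2.mem_map.mp hv
    obtain ⟨b, hb, hba⟩ := Sym2.mem_map.mp hv'
    obtain rfl := f.injective hba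
    exact hdisj e he e' he' (fun h => hne (h ▸ rfl)) b ha hb
  · rintro _ ⟨v, rfl⟩
    obtain ⟨e, he, hve⟩ := hcov v
    exact ⟨_, ⟨e, he, rfl⟩, Sym2.mem_map.mpr ⟨v, hve, rfl⟩⟩

theorem IsPMOn.comap_embedding {M : Set (Sym2 V)} (f : H ↪g G)
    (hM : IsPMOn G (Set.range f) M) : IsPM H (Sym2.map f ⁻¹' M) := by
  obtain ⟨hMG, hends, hdisj, hcov⟩ := hM
  refine ⟨?_, ?_, fun v => ?_⟩
  · intro e he
    induction e using Sym2.ind with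
    | _ a b => exact f.map_adj_iff.mp (hMG he)
  · intro e he e' he' hne v hv hv'
    exact hdisj _ he _ he' ((Sym2.map.injective f.injective).ne hne) (f v)
      (Sym2.mem_map.mpr ⟨v, hv, rfl⟩) (Sym2.mem_map.mpr ⟨v, hv', rfl⟩)
  · obtain ⟨e, he, hve⟩ := hcov (f v) ⟨v, rfl⟩
    obtain ⟨w, rfl⟩ := Sym2.mem_iff_exists.mp hve
    obtain ⟨u, rfl⟩ := hends _ he w (Sym2.mem_mk_right _ w)
    exact ⟨s(v, u), he, Sym2.mem_mk_left v u⟩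

theorem exists_isPMOn_iff_exists_isPM_induce {A : Set V} :
    (∃ M, IsPMOn G A M) ↔ ∃ M, IsPM (G.induce A) M := by
  have hrange : Set.range (Embedding.induce A : G.induce A ↪g G) = A := Subtype.range_coe
  constructor
  · rintro ⟨M, hM⟩
    exact ⟨_, IsPMOn.comap_embedding (Embedding.induce A) (hrange ▸ hM)⟩
  · rintro ⟨M, hM⟩
    exact ⟨_, hrange ▸ hM.map_embedding (Embedding.induce A)⟩

theorem SimpleGraph.Iso.ncard_oddComponents_eq (φ : H ≃g H') :
    H.oddComponents.ncard = H'.oddComponents.ncard := by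
  set e := φ.connectedComponentEquiv
  have hsupp : ∀ c, (e c).supp.ncard = c.supp.ncard := fun c => by
    simp_rw [← Nat.card_coe_set_eq]
    exact (Nat.card_congr (ConnectedComponent.isoEquivSupp φ c)).symm
  have hpre : H.oddComponents = e ⁻¹' H'.oddComponents := by
    ext c
    simp [hsupp]
  rw [hpre, Set.ncard_preimage_of_injective_subset_range e.injective (by simp)]

def SimpleGraph.induceDeleteVertsIso (A : Set V) (u : Set A) :
    ((⊤ : (G.induce A).Subgraph).deleteVerts u).coe ≃g G.induce (A \ Subtype.val '' u) where
  toFun x := ⟨x.1.1, x.1.2, fun ⟨_, hy, hyx⟩ => x.2.2 (Subtype.ext hyx ▸ hy)⟩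
  invFun y := ⟨⟨y.1, y.2.1⟩, trivial, fun h => y.2.2 ⟨_, h, rfl⟩⟩
  left_inv _ := rfl
  right_inv _ := rfl
  map_rel_iff' := by simp +contextual

theorem exists_isPMOn_iff_forall_ncard_oddComponents_le [Finite V] {A : Set V} :
    (∃ M, IsPMOn G A M) ↔ ∀ T ⊆ A, (G.induce (A \ T)).oddComponents.ncard ≤ T.ncard := by
  rw [exists_isPMOn_iff_exists_isPM_induce, exists_isPM_iff_exists_isPerfectMatching, tutte]
  simp only [IsTutteViolator, not_lt, (induceDeleteVertsIso _ _).ncard_oddComponents_eq]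
  constructor
  · intro h T hT
    have := h (Subtype.val ⁻¹' T)
    rwa [Set.image_preimage_eq_of_subset (by simpa using hT),
      Set.ncard_preimage_of_injective_subset_range Subtype.val_injective (by simpa using hT)]
      at this
  · intro h u
    rw [← Set.ncard_image_of_injective u Subtype.val_injective]
    exact h _ (Subtype.coe_image_subset A u)

theorem SimpleGraph.odd_ncard_oddComponents_induce_iff [Finite V] {B : Set V} :
    Odd (G.induce B).oddComponents.ncard ↔ Odd B.ncard := by
  rw [odd_ncard_oddComponents, Nat.card_coe_set_eq]

theorem IsPMOn.even_ncard [Finite V] {A : Set V} {M : Set (Sym2 V)} (hM : IsPMOn G A M) :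
    Even A.ncard := by
  have h := exists_isPMOn_iff_forall_ncard_oddComponents_le.mp ⟨M, hM⟩ ∅ (Set.empty_subset A)
  rw [Set.sdiff_empty, Set.ncard_empty, Nat.le_zero] at h
  rw [← Nat.not_odd_iff_even, ← odd_ncard_oddComponents_induce_iff, h]
  exact Nat.not_odd_zero

theorem exists_ncard_add_two_le_of_not_exists_isPMOn [Finite V] {A : Set V}
    (hA : Even A.ncard) (h : ¬ ∃ M, IsPMOn G A M) :
    ∃ T ⊆ A, T.ncard + 2 ≤ (G.induce (A \ T)).oddComponents.ncard := by
  rw [exists_isPMOn_iff_forall_ncard_oddComponents_le] at h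
  push Not at h
  obtain ⟨T, hTA, hlt⟩ := h
  have hpar := odd_ncard_oddComponents_induce_iff (G := G) (B := A \ T)
  rw [Set.ncard_sdiff hTA] at hpar
  have hle := Set.ncard_le_ncard hTA
  simp only [Nat.odd_iff] at hpar
  rw [Nat.even_iff] at hA
  exact ⟨T, hTA, by omega⟩

theorem SimpleGraph.Reachable.of_adj_closed {H : SimpleGraph W} {P : W → Prop}
    (hP : ∀ x y, H.Adj x y → P x → P y) {x y : W} (h : H.Reachable x y) (hx : P x) : P y := by
  rw [reachable_iff_reflTransGen] at h
  induction h with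
  | refl => exact hx
  | tail _ hab ih => exact hP _ _ hab ih

theorem SimpleGraph.ConnectedComponent.image_val_supp_closed {B : Set V}
    (c : (G.induce B).ConnectedComponent) {x y : V} (hx : x ∈ Subtype.val '' c.supp)
    (hy : y ∈ B) (hxy : G.Adj x y) : y ∈ Subtype.val '' c.supp := by
  obtain ⟨x, hx, rfl⟩ := hx
  exact ⟨⟨y, hy⟩, c.mem_supp_of_adj_mem_supp hx hxy, rfl⟩

theorem SimpleGraph.ConnectedComponent.eq_of_mem_image_val_supp {B : Set V}
    {c c' : (G.induce B).ConnectedComponent} {x : V} (hx : x ∈ Subtype.val '' c.supp)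
    (hx' : x ∈ Subtype.val '' c'.supp) : c = c' := by
  obtain ⟨x, hx, rfl⟩ := hx
  obtain ⟨y, hy, hyx⟩ := hx'
  obtain rfl := Subtype.val_injective hyx
  exact ConnectedComponent.eq_of_common_vertex hx hy

theorem SimpleGraph.image_val_supp_injective (B : Set V) :
    Function.Injective fun c : (G.induce B).ConnectedComponent => Subtype.val '' c.supp :=
  (Set.image_injective.mpr Subtype.val_injective).comp ConnectedComponent.supp_injective

/-- Odd components of different induced subgraphs are compared through their vertex sets
in `V`. -/
def SimpleGraph.oddComponentSets (G : SimpleGraph V) (B : Set V) : Set (Set V) :=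
  (fun c : (G.induce B).ConnectedComponent => Subtype.val '' c.supp) ''
    (G.induce B).oddComponents

theorem SimpleGraph.ncard_oddComponentSets (B : Set V) :
    (oddComponentSets G B).ncard = (G.induce B).oddComponents.ncard :=
  Set.ncard_image_of_injective _ (image_val_supp_injective B)

theorem SimpleGraph.image_val_supp_mem_oddComponentSets_iff {B : Set V}
    (c : (G.induce B).ConnectedComponent) :
    Subtype.val '' c.supp ∈ oddComponentSets G B ↔ Odd (Subtype.val '' c.supp).ncard := by
  rw [Set.ncard_image_of_injective _ Subtype.val_injective]
  refine ⟨?_, fun h => ⟨c, h, rfl⟩⟩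
  rintro ⟨c', hc', hcc'⟩
  rwa [← image_val_supp_injective B hcc']

theorem SimpleGraph.mem_oddComponentSets_of_subset {B C K : Set V} (hK : K ∈ oddComponentSets G B)
    (hKC : K ⊆ C) (hclosed : ∀ x ∈ K, ∀ y ∈ C, G.Adj x y → y ∈ K) :
    K ∈ oddComponentSets G C := by
  obtain ⟨c, hc, rfl⟩ := hK
  obtain ⟨v, hv⟩ := c.nonempty_supp
  let c' := (G.induce C).connectedComponentMk ⟨v, hKC ⟨v, hv, rfl⟩⟩
  have hsupp : Subtype.val '' c'.supp = Subtype.val '' c.supp := by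
    ext x
    constructor
    · rintro ⟨y, hy, rfl⟩
      refine Reachable.of_adj_closed (P := fun z => z.1 ∈ Subtype.val '' c.supp)
        (fun a b hab ha => hclosed _ ha _ b.2 hab) (ConnectedComponent.exact hy).symm ?_
      exact ⟨v, hv, rfl⟩
    · rintro ⟨y, hy, rfl⟩
      let φ : c.toSimpleGraph →g G.induce C :=
        ⟨fun z => ⟨z.1.1, hKC ⟨z.1, z.2, rfl⟩⟩, fun h => h⟩
      have hreach := (c.connected_toSimpleGraph.preconnected ⟨y, hy⟩ ⟨v, hv⟩).map φ
      exact ⟨_, ConnectedComponent.sound hreach, rfl⟩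
  refine ⟨c', ?_, hsupp⟩
  have hcard := congrArg Set.ncard hsupp
  simp only [Set.ncard_image_of_injective _ Subtype.val_injective] at hcard
  show Odd _
  rw [hcard]
  exact hc

theorem SimpleGraph.ncard_oddComponentSets_diff_add_le [Finite V] {D X : Set V}
    (c : (G.induce D).ConnectedComponent) (hX : X ⊆ Subtype.val '' c.supp) :
    (oddComponentSets G D \ {Subtype.val '' c.supp}).ncard +
        (G.induce (Subtype.val '' c.supp \ X)).oddComponents.ncard ≤
      (G.induce (D \ X)).oddComponents.ncard := by
  set K := Subtype.val '' c.supp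
  have hKD : K ⊆ D := Subtype.coe_image_subset D c.supp
  have hfar : ∀ K' ∈ oddComponentSets G D \ {K}, Disjoint K' K := by
    rintro _ ⟨⟨c', -, rfl⟩, hne⟩
    refine Set.disjoint_left.mpr fun x hx hxK => hne ?_
    rw [Set.mem_singleton_iff, ConnectedComponent.eq_of_mem_image_val_supp hx hxK]
  have hdisj : Disjoint (oddComponentSets G D \ {K}) (oddComponentSets G (K \ X)) := by
    refine Set.disjoint_left.mpr fun K' hK'D hK'K => ?_
    obtain ⟨c', -, rfl⟩ := hK'K
    obtain ⟨x, hx⟩ := c'.nonempty_supp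
    exact Set.disjoint_left.mp (hfar _ hK'D) ⟨x, hx, rfl⟩ x.2.1
  rw [← ncard_oddComponentSets, ← ncard_oddComponentSets, ← Set.ncard_union_eq hdisj]
  refine Set.ncard_le_ncard ?_
  rintro K' (hK' | hK')
  · obtain ⟨c', -, rfl⟩ := id hK'.1
    refine mem_oddComponentSets_of_subset hK'.1 ?_ fun x hx y hy hxy =>
      c'.image_val_supp_closed hx hy.1 hxy
    exact Set.subset_sdiff.mpr ⟨Subtype.coe_image_subset D c'.supp, (hfar _ hK').mono_right hX⟩
  · obtain ⟨c', -, rfl⟩ := id hK'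
    have hsub : Subtype.val '' c'.supp ⊆ K \ X := Subtype.coe_image_subset _ c'.supp
    refine mem_oddComponentSets_of_subset hK' (hsub.trans (Set.sdiff_subset_sdiff_left hKD))
      fun x hx y hy hxy => c'.image_val_supp_closed hx ⟨?_, hy.2⟩ hxy
    exact c.image_val_supp_closed (hsub hx).1 hy.1 hxy

theorem exists_isPMOn_image_val_supp_diff_singleton [Finite V] {D : Set V}
    (hD : ∀ X ⊆ D, X.Nonempty →
      (G.induce (D \ X)).oddComponents.ncard < (G.induce D).oddComponents.ncard + X.ncard)
    (c : (G.induce D).ConnectedComponent) {v : V} (hv : v ∈ Subtype.val '' c.supp) :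
    ∃ M, IsPMOn G (Subtype.val '' c.supp \ {v}) M := by
  set K := Subtype.val '' c.supp with hKdef
  have hKD : K ⊆ D := Subtype.coe_image_subset D c.supp
  have hcardK : (K \ {v}).ncard + 1 = K.ncard := Set.ncard_sdiff_singleton_add_one hv
  -- Deleting a vertex of an even component creates an odd component.
  have hKodd : Odd K.ncard := by
    by_contra hKeven
    have hK := mt (image_val_supp_mem_oddComponentSets_iff c).mp hKeven
    have hsum := ncard_oddComponentSets_diff_add_le c (Set.singleton_subset_iff.mpr hv)
    rw [← hKdef, Set.sdiff_singleton_eq_self hK, ncard_oddComponentSets] at hsum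
    have hodd : Odd (G.induce (K \ {v})).oddComponents.ncard := by
      rw [odd_ncard_oddComponents_induce_iff, Nat.odd_iff]
      rw [Nat.not_odd_iff_even, Nat.even_iff] at hKeven
      omega
    have hlt := hD {v} (Set.singleton_subset_iff.mpr (hKD hv)) (Set.singleton_nonempty v)
    rw [Set.ncard_singleton] at hlt
    have := hodd.pos
    omega
  -- Otherwise a Tutte barrier `T` of `K - v` gives the violating set `insert v T`.
  by_contra hno
  obtain ⟨T, hT, hTodd⟩ := exists_ncard_add_two_le_of_not_exists_isPMOn
    (by rw [Nat.even_iff]; rw [Nat.odd_iff] at hKodd; omega) hno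
  have hvT : v ∉ T := fun h => (hT h).2 rfl
  have hX : insert v T ⊆ K := Set.insert_subset hv fun x hx => (hT hx).1
  have hsum := ncard_oddComponentSets_diff_add_le c hX
  have hK : (oddComponentSets G D \ {K}).ncard + 1 = (G.induce D).oddComponents.ncard := by
    rw [Set.ncard_sdiff_singleton_add_one ((image_val_supp_mem_oddComponentSets_iff c).mpr hKodd),
      ncard_oddComponentSets]
  rw [← hKdef, show K \ insert v T = (K \ {v}) \ T by rw [Set.sdiff_sdiff, ← Set.insert_eq]]
    at hsum
  have hlt := hD (insert v T) (hX.trans hKD) (Set.insert_nonempty v T)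
  rw [Set.ncard_insert_of_notMem hvT] at hlt
  omega

theorem isFactorCritical_induce_supp {D : Set V} (c : (G.induce D).ConnectedComponent)
    (h : ∀ v ∈ Subtype.val '' c.supp, ∃ M, IsPMOn G (Subtype.val '' c.supp \ {v}) M) :
    IsFactorCritical ((G.induce D).induce c.supp) := by
  intro v
  let f : ((G.induce D).induce c.supp).induce {v}ᶜ ↪g G :=
    (Embedding.induce D).comp ((Embedding.induce c.supp).comp (Embedding.induce {v}ᶜ))
  have hrange : Set.range f = Subtype.val '' c.supp \ {v.1.1} := by
    ext x
    constructor
    · rintro ⟨⟨⟨y, hyc⟩, hyv⟩, rfl⟩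
      exact ⟨⟨y, hyc, rfl⟩, fun h => hyv (Subtype.ext (Subtype.ext h))⟩
    · rintro ⟨⟨y, hyc, rfl⟩, hyv⟩
      exact ⟨⟨⟨y, hyc⟩, fun h => hyv (by rw [← Set.mem_singleton_iff.mp h]; rfl)⟩, rfl⟩
  obtain ⟨M, hM⟩ := h v.1.1 ⟨v.1, v.2, rfl⟩
  exact ⟨_, IsPMOn.comap_embedding f (hrange ▸ hM)⟩

theorem exists_isFactorCritical_of_max_deficiency [Finite V] {A : Set V} {d : ℕ}
    (hle : ∀ T ⊆ A, (G.induce (A \ T)).oddComponents.ncard ≤ T.ncard + d)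
    (hex : ∃ T ⊆ A, (G.induce (A \ T)).oddComponents.ncard = T.ncard + d) :
    ∃ T ⊆ A, (G.induce (A \ T)).oddComponents.ncard = T.ncard + d ∧
      ∀ c : (G.induce (A \ T)).ConnectedComponent,
        IsFactorCritical ((G.induce (A \ T)).induce c.supp) := by
  obtain ⟨T, ⟨hTA, hT⟩, hmax⟩ := Set.exists_max_image
    {T | T ⊆ A ∧ (G.induce (A \ T)).oddComponents.ncard = T.ncard + d} Set.ncard
    (Set.toFinite _) hex
  refine ⟨T, hTA, hT, fun c => isFactorCritical_induce_supp c fun v hv =>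
    exists_isPMOn_image_val_supp_diff_singleton (fun X hX hXne => ?_) c hv⟩
  have hTX : Disjoint T X := Set.disjoint_right.mpr fun x hx => (hX hx).2
  have hTXA : T ∪ X ⊆ A := Set.union_subset hTA fun x hx => (hX hx).1
  have hcard : (T ∪ X).ncard = T.ncard + X.ncard := Set.ncard_union_eq hTX
  have hdiff : A \ (T ∪ X) = (A \ T) \ X := Set.sdiff_sdiff.symm
  have hle' := hle (T ∪ X) hTXA
  rw [hdiff, hcard] at hle'
  refine lt_of_le_of_ne (by omega) fun hcontra => ?_
  have hTX_le := hmax (T ∪ X) ⟨hTXA, by rw [hdiff, hcard]; omega⟩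
  have := hXne.ncard_pos
  omega

def edgeVerts (N : Set (Sym2 V)) : Set V := {v | ∃ e ∈ N, v ∈ e}

theorem ncard_edgeVerts [Finite V] {N : Set (Sym2 V)} (hNG : N ⊆ G.edgeSet)
    (hN : EdgesDisjoint N) : (edgeVerts N).ncard = 2 * N.ncard := by
  classical
  have hfin := N.toFinite
  have hverts : edgeVerts N = ↑(hfin.toFinset.biUnion Sym2.toFinset) := by
    ext
    simp [edgeVerts]
  rw [hverts, Set.ncard_coe_finset, Finset.card_biUnion, Finset.sum_const_nat (m := 2),
    Set.ncard_eq_toFinset_card N hfin, mul_comm]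
  · intro e he
    exact Sym2.card_toFinset_of_not_isDiag e
      (G.not_isDiag_of_mem_edgeSet (hNG (hfin.mem_toFinset.mp he)))
  · intro e he f hf hne
    refine Finset.disjoint_left.mpr fun v hve hvf => ?_
    exact hN e (hfin.mem_toFinset.mp he) f (hfin.mem_toFinset.mp hf) hne v
      (Sym2.mem_toFinset.mp hve) (Sym2.mem_toFinset.mp hvf)

theorem edgeVerts_eq_union {N : Set (Sym2 V)} {x y : V} (h : s(x, y) ∈ N) :
    edgeVerts N = edgeVerts (N \ {s(x, y)}) ∪ {x, y} := by
  ext v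
  constructor
  · rintro ⟨e, he, hve⟩
    by_cases hexy : e = s(x, y)
    · subst hexy
      exact Or.inr (Sym2.mem_iff.mp hve)
    · exact Or.inl ⟨e, ⟨he, hexy⟩, hve⟩
  · rintro (⟨e, he, hve⟩ | hv)
    · exact ⟨e, he.1, hve⟩
    · exact ⟨_, h, Sym2.mem_iff.mpr hv⟩

theorem isPMOn_edgeVerts {N : Set (Sym2 V)} (hNG : N ⊆ G.edgeSet) (hN : EdgesDisjoint N) :
    IsPMOn G (edgeVerts N) N :=
  ⟨hNG, fun e he _ hw => ⟨e, he, hw⟩, hN, fun _ hw => hw⟩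

theorem IsPM.isPMOn_compl_edgeVerts {M N : Set (Sym2 V)} (hM : IsPM G M) (hNM : N ⊆ M) :
    IsPMOn G (edgeVerts N)ᶜ (M \ N) := by
  obtain ⟨hMG, hdisj, hcov⟩ := hM
  refine ⟨fun e he => hMG he.1, ?_, fun e he f hf => hdisj e he.1 f hf.1, fun w hw => ?_⟩
  · rintro e ⟨he, heN⟩ w hwe ⟨f, hf, hwf⟩
    exact hdisj f (hNM hf) e he (fun h => heN (h ▸ hf)) w hwf hwe
  · obtain ⟨e, he, hwe⟩ := hcov w
    exact ⟨e, ⟨he, fun heN => hw ⟨e, heN, hwe⟩⟩, hwe⟩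

theorem IsPMOn.union {A B : Set V} {M M' : Set (Sym2 V)} (hAB : Disjoint A B)
    (hM : IsPMOn G A M) (hM' : IsPMOn G B M') : IsPMOn G (A ∪ B) (M ∪ M') := by
  obtain ⟨hMG, hMA, hM, hMcov⟩ := hM
  obtain ⟨hMG', hMB, hM', hMcov'⟩ := hM'
  have hcross : ∀ e ∈ M, ∀ f ∈ M', ∀ v : V, v ∈ e → v ∉ f := fun e he f hf v hve hvf =>
    Set.disjoint_left.mp hAB (hMA e he v hve) (hMB f hf v hvf)
  refine ⟨Set.union_subset hMG hMG', ?_, ?_, ?_⟩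
  · rintro e (he | he) w hw
    exacts [Or.inl (hMA e he w hw), Or.inr (hMB e he w hw)]
  · rintro e (he | he) f (hf | hf) hef v hve hvf
    · exact hM e he f hf hef v hve hvf
    · exact hcross e he f hf v hve hvf
    · exact hcross f hf e he v hvf hve
    · exact hM' e he f hf hef v hve hvf
  · rintro w (hw | hw)
    · obtain ⟨e, he, hwe⟩ := hMcov w hw
      exact ⟨e, Or.inl he, hwe⟩
    · obtain ⟨e, he, hwe⟩ := hMcov' w hw
      exact ⟨e, Or.inr he, hwe⟩

theorem IsPMOn.isPM {M : Set (Sym2 V)} (h : IsPMOn G Set.univ M) : IsPM G M :=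
  ⟨h.1, h.2.2.1, fun v => h.2.2.2 v trivial⟩

theorem ncard_oddComponents_compl_add_le [Finite V] {M N : Set (Sym2 V)} {S : Set V}
    (hM : IsPM G M) (hNM : N ⊆ M) (hNS : edgeVerts N ⊆ S) :
    (G.induce Sᶜ).oddComponents.ncard + 2 * N.ncard ≤ S.ncard := by
  have hN := ncard_edgeVerts (hNM.trans hM.1) fun e he f hf => hM.2.1 e (hNM he) f (hNM hf)
  have h := exists_isPMOn_iff_forall_ncard_oddComponents_le.mp
    ⟨_, hM.isPMOn_compl_edgeVerts hNM⟩ (S \ edgeVerts N) fun v hv => hv.2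
  have hS : (edgeVerts N)ᶜ \ (S \ edgeVerts N) = Sᶜ := Set.ext fun v =>
    ⟨fun h hvS => h.2 ⟨hvS, h.1⟩, fun h => ⟨fun hvN => h (hNS hvN), fun hv => h hv.1⟩⟩
  rw [hS, Set.ncard_sdiff hNS, hN] at h
  have := Set.ncard_le_ncard hNS
  omega

theorem exists_isFactorCritical_of_forall_isPM_not_subset [Finite V] {M N : Set (Sym2 V)} {x y : V}
    (hNG : N ⊆ G.edgeSet) (hN : EdgesDisjoint N) (hxy : s(x, y) ∈ N) (hM : IsPM G M)
    (hNM : N \ {s(x, y)} ⊆ M) (hbad : ∀ M, IsPM G M → ¬ N ⊆ M) :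
    ∃ T ⊆ (edgeVerts N)ᶜ,
      (G.induce ((edgeVerts N)ᶜ \ T)).oddComponents.ncard = T.ncard + 2 ∧
      ∀ c : (G.induce ((edgeVerts N)ᶜ \ T)).ConnectedComponent,
        IsFactorCritical ((G.induce ((edgeVerts N)ᶜ \ T)).induce c.supp) := by
  have hxy_ne : x ≠ y := (G.mem_edgeSet.mp (hNG hxy)).ne
  set N' := N \ {s(x, y)}
  have hN' : IsPMOn G (edgeVerts N')ᶜ (M \ N') := hM.isPMOn_compl_edgeVerts hNM
  have hxyN' : {x, y} ⊆ (edgeVerts N')ᶜ := by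
    rintro z hz ⟨f, ⟨hf, hfxy⟩, hzf⟩
    exact hN _ hf _ hxy hfxy z hzf (Sym2.mem_iff.mpr hz)
  have hcompl : (edgeVerts N)ᶜ = (edgeVerts N')ᶜ \ {x, y} := by
    rw [edgeVerts_eq_union hxy, Set.compl_union, ← Set.sdiff_eq]
  have hle : ∀ T ⊆ (edgeVerts N)ᶜ,
      (G.induce ((edgeVerts N)ᶜ \ T)).oddComponents.ncard ≤ T.ncard + 2 := by
    intro T hT
    have h := exists_isPMOn_iff_forall_ncard_oddComponents_le.mp ⟨_, hN'⟩ ({x, y} ∪ T)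
      (Set.union_subset hxyN' (hT.trans (hcompl ▸ Set.sdiff_subset)))
    rw [← Set.sdiff_sdiff, ← hcompl] at h
    have := Set.ncard_union_le {x, y} T
    have := Set.ncard_pair hxy_ne
    omega
  have hnoPM : ¬ ∃ M', IsPMOn G (edgeVerts N)ᶜ M' := by
    rintro ⟨M', hM'⟩
    have hunion := (isPMOn_edgeVerts hNG hN).union disjoint_compl_right hM'
    rw [Set.union_compl_self] at hunion
    exact hbad _ hunion.isPM Set.subset_union_left
  have heven : Even (edgeVerts N)ᶜ.ncard := by
    have h := hN'.even_ncard
    have := Set.ncard_le_ncard hxyN'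
    rw [hcompl, Set.ncard_sdiff hxyN', Set.ncard_pair hxy_ne]
    rw [Set.ncard_pair hxy_ne] at this
    rw [Nat.even_iff] at h ⊢
    omega
  obtain ⟨T, hT, hTle⟩ := exists_ncard_add_two_le_of_not_exists_isPMOn heven hnoPM
  exact exists_isFactorCritical_of_max_deficiency hle ⟨T, hT, le_antisymm (hle T hT) hTle⟩

end

/-- Lemma 3.1. -/
theorem stmt9 {V : Type*} [Fintype V] (l : ℕ) (hl : 1 ≤ l)
    (G : SimpleGraph V) (hcard : 2 * l + 2 ≤ Fintype.card V)
    (hext : IsExtendable G (l - 1)) :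
    ¬ IsExtendable G l ↔
      ∃ S : Set V,
        (∃ N : Set (Sym2 V), N ⊆ G.edgeSet ∧
          (∀ e ∈ N, ∀ w : V, w ∈ e → w ∈ S) ∧
          (∀ e ∈ N, ∀ f ∈ N, e ≠ f → ∀ v : V, v ∈ e → v ∉ f) ∧
          N.ncard = l) ∧
        (∀ c : (G.induce Sᶜ).ConnectedComponent,
          IsFactorCritical ((G.induce Sᶜ).induce c.supp)) ∧
        _root_.oddComponents (G.induce Sᶜ) + 2 * l = S.ncard + 2 := by
  obtain ⟨hconn, -, hpm, hext⟩ := hext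
  constructor
  · intro hnot
    obtain ⟨N, hNG, hN, hNl, hbad⟩ : ∃ N ⊆ G.edgeSet, EdgesDisjoint N ∧ N.ncard = l ∧
        ∀ M, IsPM G M → ¬ N ⊆ M := by
      by_contra! h
      exact hnot ⟨hconn, hcard, hpm, fun N hNG hN hNl => h N hNG hN hNl⟩
    obtain ⟨⟨x, y⟩, hxy⟩ := Set.nonempty_of_ncard_ne_zero (s := N) (by omega)
    obtain ⟨M, hM, hNM⟩ := hext (N \ {s(x, y)}) (fun e he => hNG he.1)
      (fun e he f hf => hN e he.1 f hf.1) (by rw [Set.ncard_sdiff_singleton_of_mem hxy, hNl])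
    obtain ⟨T, hT, hTodd, hfc⟩ :=
      exists_isFactorCritical_of_forall_isPM_not_subset hNG hN hxy hM hNM hbad
    have hS : (edgeVerts N ∪ T)ᶜ = (edgeVerts N)ᶜ \ T := by rw [Set.compl_union, Set.sdiff_eq]
    refine ⟨edgeVerts N ∪ T, ⟨N, hNG, fun e he w hw => Or.inl ⟨e, he, hw⟩, hN, hNl⟩,
      hS ▸ hfc, ?_⟩
    rw [hS, Set.ncard_union_eq (Set.disjoint_right.mpr fun _ hv => hT hv), ncard_edgeVerts hNG hN]
    change (G.induce _).oddComponents.ncard + _ = _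
    omega
  · rintro ⟨S, ⟨N, hNG, hNS, hN, hNl⟩, -, hS⟩ hlext
    obtain ⟨M, hM, hNM⟩ := hlext.2.2.2 N hNG hN hNl
    have := ncard_oddComponents_compl_add_le hM hNM fun v ⟨e, he, hv⟩ => hNS e he v hv
    change (G.induce Sᶜ).oddComponents.ncard + _ = _ at hS
    omega
end
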